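/- arXiv:2303.12623 — 6 statements merged into one kernel-verified Lean document; each statement's English description precedes it below -/
import Mathlib

section
/- Let (Y_t)_{t≥0} be a Yule process with parameter λ>0 (a pure birth process started from one individual where each individual gives birth at rate λ). Then for all a,b,y>0 with a≤b, P( sup_{t∈[a,b]} |log Y_t − λt| ≥ yb ) ≤ (2 + λa) · exp(−yb + λ(b−a)). -/
open MeasureTheory ProbabilityTheory Filter

lemma aux_geom (r : ℝ) (h0 : 0 ≤ r) (h1 : r < 1) (m : ℕ) :
    (1 - r) * m * r ^ (m - 1) ≤ 1 := by
  have hs : (m : ℝ) * r ^ (m - 1) ≤ (1 - r)⁻¹ := by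
    have h2 : (m : ℝ) * r ^ (m - 1) = ∑ k ∈ Finset.range m, r ^ (m - 1) := by
      rw [Finset.sum_const, Finset.card_range, nsmul_eq_mul]
    have h3 : ∑ k ∈ Finset.range m, r ^ (m - 1) ≤ ∑ k ∈ Finset.range m, r ^ k := by
      apply Finset.sum_le_sum
      intro k hk
      exact pow_le_pow_of_le_one h0 h1.le (by have := Finset.mem_range.mp hk; omega)
    have h4 : ∑ k ∈ Finset.range m, r ^ k ≤ ∑' k : ℕ, r ^ k :=
      Summable.sum_le_tsum _ (fun k _ => pow_nonneg h0 k) (summable_geometric_of_lt_one h0 h1)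
    rw [tsum_geometric_of_lt_one h0 h1] at h4
    linarith
  have h5 : 0 < 1 - r := by linarith
  calc (1 - r) * m * r ^ (m - 1) = (1 - r) * ((m : ℝ) * r ^ (m - 1)) := by ring
    _ ≤ (1 - r) * (1 - r)⁻¹ := by
        exact mul_le_mul_of_nonneg_left hs h5.le
    _ = 1 := mul_inv_cancel₀ h5.ne'

/-- A large deviations bound for the Yule process: if `(Y t)` is a Yule process of
parameter `lam > 0` (pure birth process started from one individual, with marginal law
`P(Y t = k) = exp(-lam t)(1-exp(-lam t))^(k-1)` and nondecreasing paths), then for all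
`0 < a ≤ b` and `y > 0`,
`P(sup_{t ∈ [a,b]} |log Y_t - lam t| ≥ y b) ≤ (2 + lam a) exp(-y b + lam (b-a))`. -/
theorem yule_sup_log_deviation_bound
    {Ω : Type*} [MeasurableSpace Ω] (P : Measure Ω) [IsProbabilityMeasure P]
    (lam : ℝ) (hlam : 0 < lam)
    (Y : ℝ → Ω → ℕ)
    (hstart : ∀ ω, Y 0 ω = 1)
    (hmono : ∀ ω ⦃s t : ℝ⦄, 0 ≤ s → s ≤ t → Y s ω ≤ Y t ω)
    (hlaw : ∀ t : ℝ, 0 ≤ t → ∀ k : ℕ, 1 ≤ k →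
      P {ω | Y t ω = k} =
        ENNReal.ofReal (Real.exp (-lam * t) * (1 - Real.exp (-lam * t)) ^ (k - 1)))
    (a b y : ℝ) (ha : 0 < a) (hy : 0 < y) (hab : a ≤ b) :
    P {ω | ∃ t ∈ Set.Icc a b, y * b ≤ |Real.log (Y t ω : ℝ) - lam * t|} ≤
      ENNReal.ofReal ((2 + lam * a) * Real.exp (-(y * b) + lam * (b - a))) := by
  have hb : 0 < b := lt_of_lt_of_le ha hab
  set q := Real.exp (-lam * b) with hq_def
  set p := Real.exp (-lam * a) with hp_def
  have hq0 : 0 < q := Real.exp_pos _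
  have hq1 : q < 1 := by
    have h := Real.exp_lt_exp.mpr (show -lam * b < 0 by nlinarith)
    rwa [Real.exp_zero] at h
  have hp0 : 0 < p := Real.exp_pos _
  have hp1 : p < 1 := by
    have h := Real.exp_lt_exp.mpr (show -lam * a < 0 by nlinarith)
    rwa [Real.exp_zero] at h
  set E := Real.exp (-(y * b) + lam * (b - a)) with hE_def
  have hE0 : 0 < E := Real.exp_pos _
  have hY1 : ∀ ω, ∀ t : ℝ, 0 ≤ t → 1 ≤ Y t ω := by
    intro ω t ht
    have := hmono ω le_rfl ht
    rw [hstart ω] at this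
    exact this
  set m₁ := ⌈Real.exp (y * b + lam * a)⌉₊ with hm₁
  set m₂ := ⌊Real.exp (lam * b - y * b)⌋₊ with hm₂
  have hm₁1 : 1 ≤ m₁ := Nat.one_le_ceil_iff.mpr (Real.exp_pos _)
  -- inclusion of events
  have hsub : {ω | ∃ t ∈ Set.Icc a b, y * b ≤ |Real.log (Y t ω : ℝ) - lam * t|} ⊆
      {ω | m₁ ≤ Y b ω} ∪ {ω | Y a ω ≤ m₂} := by
    rintro ω ⟨t, ⟨hta, htb⟩, habs⟩
    have ht0 : 0 ≤ t := (ha.trans_le hta).le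
    have hYt1 : 1 ≤ Y t ω := hY1 ω t ht0
    have hYtpos : (0 : ℝ) < (Y t ω : ℝ) := by exact_mod_cast hYt1
    rcases le_abs.mp habs with h | h
    · left
      have hYb1 : 1 ≤ Y b ω := hY1 ω b hb.le
      have hYbpos : (0 : ℝ) < (Y b ω : ℝ) := by exact_mod_cast hYb1
      have hle : (Y t ω : ℝ) ≤ (Y b ω : ℝ) := by exact_mod_cast hmono ω ht0 htb
      have hlog : Real.log (Y t ω : ℝ) ≤ Real.log (Y b ω : ℝ) :=
        Real.log_le_log hYtpos hle
      have h2 : y * b + lam * a ≤ Real.log (Y b ω : ℝ) := by nlinarith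
      have h3 : Real.exp (y * b + lam * a) ≤ (Y b ω : ℝ) :=
        (Real.le_log_iff_exp_le hYbpos).mp h2
      exact Nat.ceil_le.mpr h3
    · right
      have hYa1 : 1 ≤ Y a ω := hY1 ω a ha.le
      have hYapos : (0 : ℝ) < (Y a ω : ℝ) := by exact_mod_cast hYa1
      have hle : (Y a ω : ℝ) ≤ (Y t ω : ℝ) := by exact_mod_cast hmono ω ha.le hta
      have hlog : Real.log (Y a ω : ℝ) ≤ Real.log (Y t ω : ℝ) :=
        Real.log_le_log hYapos hle
      have h2 : Real.log (Y a ω : ℝ) ≤ lam * b - y * b := by nlinarith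
      have h3 : (Y a ω : ℝ) ≤ Real.exp (lam * b - y * b) :=
        (Real.log_le_iff_le_exp hYapos).mp h2
      exact Nat.le_floor h3
  -- bound for upper event
  have h1 : P {ω | m₁ ≤ Y b ω} ≤ ENNReal.ofReal E := by
    have hsub1 : {ω | m₁ ≤ Y b ω} ⊆ ⋃ k : ℕ, {ω | Y b ω = m₁ + k} := by
      intro ω hω
      simp only [Set.mem_setOf_eq] at hω
      exact Set.mem_iUnion.mpr ⟨Y b ω - m₁, by simp only [Set.mem_setOf_eq]; omega⟩
    refine le_trans (le_trans (measure_mono hsub1) (measure_iUnion_le _)) ?_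
    have heq : ∀ k : ℕ, P {ω | Y b ω = m₁ + k} =
        ENNReal.ofReal (q * (1 - q) ^ (m₁ - 1) * (1 - q) ^ k) := by
      intro k
      rw [hlaw b hb.le (m₁ + k) (by omega)]
      congr 1
      rw [show m₁ + k - 1 = (m₁ - 1) + k by omega, pow_add]
      ring
    simp_rw [heq]
    have hsummable : Summable (fun k : ℕ => q * (1 - q) ^ (m₁ - 1) * (1 - q) ^ k) :=
      (summable_geometric_of_lt_one (by linarith) (by linarith)).mul_left _
    rw [← ENNReal.ofReal_tsum_of_nonneg (fun k => mul_nonneg (mul_nonneg hq0.le (pow_nonneg (by linarith) _)) (pow_nonneg (by linarith) _)) hsummable]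
    apply ENNReal.ofReal_le_ofReal
    rw [tsum_mul_left, tsum_geometric_of_lt_one (by linarith) (by linarith)]
    have key : (1 - (1 - q)) * (m₁ : ℝ) * (1 - q) ^ (m₁ - 1) ≤ 1 :=
      aux_geom (1 - q) (by linarith) (by linarith) m₁
    have hXm : Real.exp (y * b + lam * a) ≤ (m₁ : ℝ) := Nat.le_ceil _
    have hEq1 : E * (q * Real.exp (y * b + lam * a)) = 1 := by
      rw [hE_def, hq_def, ← Real.exp_add, ← Real.exp_add]
      rw [show -(y * b) + lam * (b - a) + (-lam * b + (y * b + lam * a)) = 0 by ring]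
      exact Real.exp_zero
    have hA : (0:ℝ) ≤ (1 - q) ^ (m₁ - 1) := pow_nonneg (by linarith) _
    have hinv : 1 - (1 - q) = q := by ring
    rw [hinv] at key
    rw [show (1 - (1 - q))⁻¹ = q⁻¹ by rw [hinv]]
    rw [mul_assoc, mul_comm ((1-q)^(m₁-1)) q⁻¹, ← mul_assoc, mul_inv_cancel₀ hq0.ne', one_mul]
    -- goal: (1-q)^(m₁-1) ≤ E
    nlinarith [mul_le_mul_of_nonneg_left key hE0.le,
      mul_le_mul_of_nonneg_right (mul_le_mul_of_nonneg_left hXm hq0.le) hA,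
      Real.exp_pos (y * b + lam * a)]
  -- bound for lower event
  have h2 : P {ω | Y a ω ≤ m₂} ≤ ENNReal.ofReal E := by
    have hsub2 : {ω | Y a ω ≤ m₂} ⊆ ⋃ k ∈ Finset.Icc 1 m₂, {ω | Y a ω = k} := by
      intro ω hω
      refine Set.mem_iUnion₂.mpr ⟨Y a ω, ?_, rfl⟩
      exact Finset.mem_Icc.mpr ⟨hY1 ω a ha.le, hω⟩
    refine le_trans (le_trans (measure_mono hsub2) (measure_biUnion_finset_le _ _)) ?_
    have hbound : ∀ k ∈ Finset.Icc 1 m₂, P {ω | Y a ω = k} ≤ ENNReal.ofReal p := by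
      intro k hk
      obtain ⟨hk1, hk2⟩ := Finset.mem_Icc.mp hk
      rw [hlaw a ha.le k hk1]
      apply ENNReal.ofReal_le_ofReal
      nlinarith [pow_le_one₀ (show (0:ℝ) ≤ 1 - p by linarith) (show 1 - p ≤ 1 by linarith) (n := k-1)]
    calc ∑ k ∈ Finset.Icc 1 m₂, P {ω | Y a ω = k}
        ≤ (Finset.Icc 1 m₂).card • ENNReal.ofReal p := Finset.sum_le_card_nsmul _ _ _ hbound
      _ = ENNReal.ofReal ((m₂ : ℝ) * p) := by
          have hcard : (Finset.Icc 1 m₂).card = m₂ := by rw [Nat.card_Icc]; omega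
          rw [hcard, nsmul_eq_mul, ← ENNReal.ofReal_natCast, ← ENNReal.ofReal_mul (by positivity)]
      _ ≤ ENNReal.ofReal E := by
          apply ENNReal.ofReal_le_ofReal
          have h4 : (m₂ : ℝ) ≤ Real.exp (lam * b - y * b) := Nat.floor_le (Real.exp_pos _).le
          have h5 : Real.exp (lam * b - y * b) * p = E := by
            rw [hE_def, hp_def, ← Real.exp_add]
            congr 1; ring
          nlinarith
  calc P {ω | ∃ t ∈ Set.Icc a b, y * b ≤ |Real.log (Y t ω : ℝ) - lam * t|}
      ≤ P ({ω | m₁ ≤ Y b ω} ∪ {ω | Y a ω ≤ m₂}) := measure_mono hsub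
    _ ≤ P {ω | m₁ ≤ Y b ω} + P {ω | Y a ω ≤ m₂} := measure_union_le _ _
    _ ≤ ENNReal.ofReal E + ENNReal.ofReal E := add_le_add h1 h2
    _ = ENNReal.ofReal (2 * E) := by rw [← ENNReal.ofReal_add hE0.le hE0.le]; ring_nf
    _ ≤ ENNReal.ofReal ((2 + lam * a) * E) := by
        apply ENNReal.ofReal_le_ofReal
        nlinarith [mul_pos hlam ha, hE0]
end

section
/- In the setting of the previous identity, for any ε>0 and x > −v_t/w_t, 0 ≤ π(A_t(x)) − π(A_t(x+ε)) ≤ ε θ t w_t μ((v_t + x w_t, M)) / (v_t + x w_t). -/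
open MeasureTheory Filter

/-- Difference bound for the intensity measure: with
`A_t(x) = {(s,w) ∈ [0,t] × [0,M) : w(t-s) > t v_t + x t w_t}` and `π = θ ds ⊗ dμ`,
for any `ε > 0` and `x > -v_t/w_t`,
`0 ≤ π(A_t(x)) - π(A_t(x+ε)) ≤ ε θ t w_t μ((v_t + x w_t, ∞)) / (v_t + x w_t)`,
stated as the two inequalities `π(A_t(x+ε)) ≤ π(A_t(x))` and
`π(A_t(x)) ≤ π(A_t(x+ε)) + ε θ t w_t μ((v_t + x w_t, ∞)) / (v_t + x w_t)`. -/
theorem intensity_measure_difference_bound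
    (θ t v w x ε : ℝ) (hθ : 0 < θ) (ht : 0 < t) (hv : 0 ≤ v) (hw : 0 < w)
    (hx : -v / w < x) (hε : 0 < ε)
    (μ : Measure ℝ) [IsProbabilityMeasure μ] (hsupp : μ (Set.Iic 0) = 0)
    (π : Measure (ℝ × ℝ))
    (hπ : π = (ENNReal.ofReal θ • (volume.restrict (Set.Ici (0 : ℝ)))).prod μ) :
    π {p : ℝ × ℝ | p.1 ∈ Set.Icc 0 t ∧ t * v + (x + ε) * t * w < p.2 * (t - p.1)} ≤
      π {p : ℝ × ℝ | p.1 ∈ Set.Icc 0 t ∧ t * v + x * t * w < p.2 * (t - p.1)} ∧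
    π {p : ℝ × ℝ | p.1 ∈ Set.Icc 0 t ∧ t * v + x * t * w < p.2 * (t - p.1)} ≤
      π {p : ℝ × ℝ | p.1 ∈ Set.Icc 0 t ∧ t * v + (x + ε) * t * w < p.2 * (t - p.1)} +
        ENNReal.ofReal (ε * θ * (t * w) * (μ (Set.Ioi (v + x * w))).toReal / (v + x * w)) := by
  have hvw : -v < x * w := (div_lt_iff₀ hw).mp hx
  have ha : 0 < v + x * w := by linarith
  set a : ℝ := v + x * w with ha_def
  set c : ℝ := t * v + x * t * w with hc_def
  set c' : ℝ := t * v + (x + ε) * t * w with hc'_def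
  have hcc' : c' - c = ε * t * w := by ring
  have hc_pos : 0 < c := by nlinarith
  have hεtw : 0 < ε * t * w := by positivity
  have hcc'lt : c < c' := by linarith
  set E : Set (ℝ × ℝ) :=
    {p : ℝ × ℝ | a < p.2 ∧ t - c' / p.2 ≤ p.1 ∧ p.1 ≤ t - c / p.2} with hE_def
  constructor
  · apply measure_mono
    rintro p ⟨hp1, hp2⟩
    exact ⟨hp1, by nlinarith⟩
  · -- A(x) ⊆ A(x+ε) ∪ E
    have hsub : {p : ℝ × ℝ | p.1 ∈ Set.Icc 0 t ∧ c < p.2 * (t - p.1)} ⊆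
        {p : ℝ × ℝ | p.1 ∈ Set.Icc 0 t ∧ c' < p.2 * (t - p.1)} ∪ E := by
      rintro p ⟨⟨hs0, hst⟩, hc⟩
      by_cases hB : c' < p.2 * (t - p.1)
      · exact Or.inl ⟨⟨hs0, hst⟩, hB⟩
      · push_neg at hB
        right
        have hts : 0 < t - p.1 := by
          rcases lt_or_ge 0 (t - p.1) with h | h
          · exact h
          · exfalso
            have h0 : t - p.1 = 0 := le_antisymm h (by linarith)
            rw [h0, mul_zero] at hc
            linarith
        have hprod : 0 < p.2 * (t - p.1) := lt_trans hc_pos hc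
        have hp2pos : 0 < p.2 := by
          by_contra h
          push_neg at h
          nlinarith
        have hp2 : a < p.2 := by
          by_contra h
          push_neg at h
          have h1 : p.2 * (t - p.1) ≤ a * (t - p.1) :=
            mul_le_mul_of_nonneg_right h hts.le
          have h2 : a * (t - p.1) ≤ a * t := by nlinarith
          have h3 : c = t * a := by rw [hc_def, ha_def]; ring
          nlinarith
        refine ⟨hp2, ?_, ?_⟩
        · have : t - p.1 ≤ c' / p.2 := (le_div_iff₀ hp2pos).mpr (by nlinarith)
          linarith
        · have : c / p.2 ≤ t - p.1 := (div_le_iff₀ hp2pos).mpr (by nlinarith)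
          linarith
    have hEm : MeasurableSet E := by
      apply MeasurableSet.inter
      · exact measurableSet_lt measurable_const measurable_snd
      apply MeasurableSet.inter
      · exact measurableSet_le (measurable_const.sub (measurable_const.div measurable_snd)) measurable_fst
      · exact measurableSet_le measurable_fst (measurable_const.sub (measurable_const.div measurable_snd))
    have hEbound : π E ≤
        ENNReal.ofReal (ε * θ * (t * w) * (μ (Set.Ioi a)).toReal / a) := by
      rw [hπ, Measure.prod_apply_symm hEm]
      have hslice : ∀ y : ℝ,
          (ENNReal.ofReal θ • volume.restrict (Set.Ici (0:ℝ))) ((fun s => (s, y)) ⁻¹' E) ≤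
          Set.indicator (Set.Ioi a) (fun _ => ENNReal.ofReal θ * ENNReal.ofReal (ε * t * w / a)) y := by
        intro y
        by_cases hy : a < y
        · have hy0 : 0 < y := lt_trans ha hy
          have hpre : (fun s => (s, y)) ⁻¹' E ⊆ Set.Icc (t - c' / y) (t - c / y) := by
            rintro s ⟨_, h1, h2⟩; exact ⟨h1, h2⟩
          rw [Set.indicator_of_mem (Set.mem_Ioi.mpr hy), Measure.smul_apply, smul_eq_mul]
          apply mul_le_mul_right
          calc (volume.restrict (Set.Ici (0:ℝ))) ((fun s => (s, y)) ⁻¹' E)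
              ≤ volume (Set.Icc (t - c' / y) (t - c / y)) :=
                le_trans (measure_mono hpre) (Measure.restrict_le_self _)
            _ = ENNReal.ofReal ((t - c / y) - (t - c' / y)) := Real.volume_Icc
            _ ≤ ENNReal.ofReal (ε * t * w / a) := by
                apply ENNReal.ofReal_le_ofReal
                have heq : (t - c / y) - (t - c' / y) = (c' - c) / y := by
                  field_simp
                  ring
                rw [heq, hcc']
                exact div_le_div_of_nonneg_left hεtw.le ha hy.le
        · have : (fun s => (s, y)) ⁻¹' E = ∅ := by
            ext s; simp only [Set.mem_preimage, Set.mem_empty_iff_false, iff_false]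
            rintro ⟨h1, _, _⟩; exact hy h1
          rw [this]
          simp
      calc ∫⁻ y, (ENNReal.ofReal θ • volume.restrict (Set.Ici (0:ℝ))) ((fun s => (s, y)) ⁻¹' E) ∂μ
          ≤ ∫⁻ y, Set.indicator (Set.Ioi a) (fun _ => ENNReal.ofReal θ * ENNReal.ofReal (ε * t * w / a)) y ∂μ :=
            lintegral_mono hslice
        _ = ENNReal.ofReal θ * ENNReal.ofReal (ε * t * w / a) * μ (Set.Ioi a) :=
            lintegral_indicator_const measurableSet_Ioi _
        _ = ENNReal.ofReal (ε * θ * (t * w) * (μ (Set.Ioi a)).toReal / a) := by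
            have hμ : μ (Set.Ioi a) = ENNReal.ofReal ((μ (Set.Ioi a)).toReal) :=
              (ENNReal.ofReal_toReal (measure_ne_top μ _)).symm
            conv_lhs => rw [hμ]
            rw [← ENNReal.ofReal_mul hθ.le, ← ENNReal.ofReal_mul (by positivity)]
            congr 1
            ring
    calc π {p : ℝ × ℝ | p.1 ∈ Set.Icc 0 t ∧ c < p.2 * (t - p.1)}
        ≤ π ({p : ℝ × ℝ | p.1 ∈ Set.Icc 0 t ∧ c' < p.2 * (t - p.1)} ∪ E) := measure_mono hsub
      _ ≤ π {p : ℝ × ℝ | p.1 ∈ Set.Icc 0 t ∧ c' < p.2 * (t - p.1)} + π E := measure_union_le _ _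
      _ ≤ _ := add_le_add_right hEbound _
end

section
/- With μ, A, B as in the previous statement (μ((1−x,1)) = exp(1−x^{-α})), there exists C>0 such that for all t ≥ e and all x with −α(1+log t) < x < (α/2)(1+log t), t·μ((A(t)+xB(t), 1)) ≥ exp(−x − C x²/(α²(1+log t))). -/
open Filter

lemma exp_quad {z : ℝ} (hz : z ≤ 1/2) : Real.exp z ≤ 1 + z + 2*z^2 := by
  have h1 : (0:ℝ) < 1 - z := by linarith
  have h2 : 1 - z ≤ Real.exp (-z) := by have := Real.add_one_le_exp (-z); linarith
  have h3 : Real.exp z ≤ (1-z)⁻¹ := by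
    rw [show Real.exp z = (Real.exp (-z))⁻¹ by rw [Real.exp_neg, inv_inv]]
    exact inv_anti₀ h1 h2
  have h4 : (1-z)⁻¹ ≤ 1 + z + 2*z^2 := by
    rw [inv_eq_one_div, div_le_iff₀ h1]; nlinarith
  linarith

lemma key_ineq (α : ℝ) (hα : 0 < α) :
    ∃ C₀ : ℝ, 0 < C₀ ∧ ∀ y : ℝ, -1 < y → y < 1/2 →
      (1 - y) ^ (-α) ≤ 1 + α * y + C₀ * y^2 := by
  obtain ⟨δ, hδ, hδ2, hδ8⟩ : ∃ δ : ℝ, 0 < δ ∧ δ ≤ 1/2 ∧ α * δ ≤ 1/8 := by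
    refine ⟨min (1/2) (1/(8*α)), lt_min (by norm_num) (by positivity), min_le_left _ _, ?_⟩
    have h := min_le_right (1/2 : ℝ) (1/(8*α))
    calc α * min (1/2 : ℝ) (1/(8*α)) ≤ α * (1/(8*α)) := by nlinarith
    _ = 1/8 := by field_simp
  refine ⟨2*α + 8*α^2 + ((2:ℝ)^α + α)/δ^2, by positivity, ?_⟩
  intro y hy1 hy2
  have h1y : (0:ℝ) < 1 - y := by linarith
  rcases le_or_gt (|y|) δ with hcase | hcase
  · obtain ⟨hya, hyb⟩ := abs_le.mp hcase
    have hlog : -Real.log (1-y) ≤ y + 2*y^2 := by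
      have h := Real.log_le_sub_one_of_pos (inv_pos.mpr h1y)
      rw [Real.log_inv] at h
      have h5 : (1-y)⁻¹ ≤ 1 + y + 2*y^2 := by
        rw [inv_eq_one_div, div_le_iff₀ h1y]; nlinarith
      linarith
    have hy2sq : y^2 ≤ δ^2 := sq_le_sq' (by linarith) hyb
    have hzb : α * (y + 2*y^2) ≤ 1/2 := by
      have h1 : y + 2*y^2 ≤ 2*δ := by nlinarith
      nlinarith
    have hrw : (1-y) ^ (-α) = Real.exp (Real.log (1-y) * (-α)) := Real.rpow_def_of_pos h1y _
    have step1 : (1-y) ^ (-α) ≤ Real.exp (α * (y + 2*y^2)) := by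
      rw [hrw, Real.exp_le_exp]
      nlinarith [mul_le_mul_of_nonneg_left hlog hα.le]
    have step2 : Real.exp (α * (y + 2*y^2)) ≤ 1 + α*(y+2*y^2) + 2*(α*(y+2*y^2))^2 :=
      exp_quad hzb
    have h2y : (1+2*y)^2 ≤ 4 := by nlinarith
    have hb : (y+2*y^2)^2 ≤ 4*y^2 := by
      nlinarith [mul_le_mul_of_nonneg_left h2y (sq_nonneg y)]
    have hb2 : 2*α^2*(y+2*y^2)^2 ≤ 8*α^2*y^2 := by
      nlinarith [mul_le_mul_of_nonneg_left hb (show (0:ℝ) ≤ 2*α^2 by positivity)]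
    have hpos2 : 0 ≤ ((2:ℝ)^α + α)/δ^2 * y^2 := by positivity
    have hexp : (2*α + 8*α^2 + ((2:ℝ)^α + α)/δ^2) * y^2
        = (2*α+8*α^2)*y^2 + ((2:ℝ)^α + α)/δ^2 * y^2 := by ring
    linarith [step1, step2, hb2, hpos2]
  · have hyd : δ^2 ≤ y^2 := by
      have := pow_le_pow_left₀ hδ.le hcase.le 2
      rwa [sq_abs] at this
    have hlhs : (1-y) ^ (-α) ≤ (2:ℝ)^α := by
      have h2 : (1/2 : ℝ) ≤ 1 - y := by linarith
      calc (1-y) ^ (-α) ≤ (1/2 : ℝ) ^ (-α) :=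
            Real.rpow_le_rpow_of_nonpos (by norm_num) h2 (by linarith)
      _ = (2:ℝ)^α := by
            rw [show (1/2:ℝ) = 2⁻¹ by norm_num, Real.inv_rpow (by norm_num),
              Real.rpow_neg (by norm_num), inv_inv]
    have hdiv : ((2:ℝ)^α + α)/δ^2 * δ^2 = (2:ℝ)^α + α := by field_simp
    have hmul : ((2:ℝ)^α + α)/δ^2 * δ^2 ≤ ((2:ℝ)^α + α)/δ^2 * y^2 :=
      mul_le_mul_of_nonneg_left hyd (by positivity)
    have hay : -α ≤ α * y := by nlinarith [mul_nonneg hα.le (show (0:ℝ) ≤ 1+y by linarith)]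
    have hexp : (2*α + 8*α^2 + ((2:ℝ)^α + α)/δ^2) * y^2
        = (2*α+8*α^2)*y^2 + ((2:ℝ)^α + α)/δ^2 * y^2 := by ring
    have hnn : 0 ≤ (2*α+8*α^2)*y^2 := by positivity
    linarith [hlhs, hay, hdiv, hmul, hexp, hnn]

set_option maxHeartbeats 800000 in
/-- Bounded Gumbel example, lower bound: for the distribution on `[0,1)` with
`μ((1-x,1)) = exp(1 - x^{-α})` for `x ∈ (0,1]`, with `A(t) = 1 - (1+log t)^{-1/α}` and
`B(t) = (1/α)(1+log t)^{-(α+1)/α}`, there exists `C > 0` such that for all `t ≥ e`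
and all `x` with `-α(1+log t) < x < (α/2)(1+log t)`,
`t μ((A(t)+xB(t),1)) ≥ exp(-x - C x²/(α²(1+log t)))`. -/
theorem gumbel_bounded_lower_bound
    (α : ℝ) (hα : 0 < α)
    (μ : MeasureTheory.Measure ℝ) [MeasureTheory.IsProbabilityMeasure μ]
    (hsupp₀ : μ (Set.Iic 0) = 0) (hsupp₁ : μ (Set.Ici 1) = 0)
    (hμ : ∀ x : ℝ, 0 < x → x ≤ 1 →
      μ (Set.Ioo (1 - x) 1) = ENNReal.ofReal (Real.exp (1 - x ^ (-α))))
    (A B : ℝ → ℝ)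
    (hA : ∀ t, A t = 1 - (1 + Real.log t) ^ (-(1 / α)))
    (hB : ∀ t, B t = (1 / α) * (1 + Real.log t) ^ (-((α + 1) / α))) :
    ∃ C : ℝ, 0 < C ∧ ∀ t : ℝ, Real.exp 1 ≤ t → ∀ x : ℝ,
      -(α * (1 + Real.log t)) < x → x < (α / 2) * (1 + Real.log t) →
      Real.exp (-x - C * x ^ 2 / (α ^ 2 * (1 + Real.log t))) ≤
        t * (μ (Set.Ioo (A t + x * B t) 1)).toReal := by
  obtain ⟨C₀, hC₀, hkey⟩ := key_ineq α hα
  set c : ℝ := (2:ℝ) ^ (1/α) - 1 with hcdef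
  have hc : 0 < c := by
    have : (1:ℝ) < (2:ℝ) ^ (1/α) :=
      (Real.one_lt_rpow_iff_of_pos (by norm_num)).mpr (Or.inl ⟨one_lt_two, by positivity⟩)
    simp only [hcdef]; linarith
  refine ⟨C₀ + α/c + 1, by positivity, ?_⟩
  intro t ht x hx1 hx2
  have ht0 : 0 < t := lt_of_lt_of_le (Real.exp_pos 1) ht
  set L : ℝ := 1 + Real.log t with hLdef
  have hlt : 1 ≤ Real.log t := by rw [Real.le_log_iff_exp_le ht0]; exact ht
  have hL : 2 ≤ L := by rw [hLdef]; linarith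
  have hL0 : (0:ℝ) < L := by linarith
  have hαL : 0 < α * L := by positivity
  clear_value L
  obtain ⟨y, hx⟩ : ∃ y : ℝ, x = α * L * y := ⟨x / (α * L), by field_simp⟩
  have hy1 : -1 < y := by nlinarith
  have hy2 : y < 1/2 := by nlinarith
  have h1y : (0:ℝ) < 1 - y := by linarith
  obtain ⟨P, hPdef⟩ : ∃ P : ℝ, P = L ^ (-(1/α)) := ⟨_, rfl⟩
  have hP : 0 < P := hPdef ▸ Real.rpow_pos_of_pos hL0 _
  have hform : A t + x * B t = 1 - (1 - y) * P := by
    rw [hA, hB, ← hLdef]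
    have hsplit : L ^ (-((α+1)/α)) = P * L⁻¹ := by
      rw [show -((α+1)/α) = (-(1/α)) + (-1) by field_simp; ring,
        Real.rpow_add hL0, Real.rpow_neg_one, hPdef]
    rw [hsplit, ← hPdef, hx]
    field_simp
    ring
  have hts : t = Real.exp (L - 1) := by
    rw [show L - 1 = Real.log t by rw [hLdef]; ring, Real.exp_log ht0]
  have hxx : (C₀ + α/c + 1) * x ^ 2 / (α^2 * L) = (C₀ + α/c + 1) * (L * y^2) := by
    rw [hx]; field_simp
  rcases le_or_gt ((1-y)*P) 1 with hu | hu
  · have hu0 : 0 < (1-y)*P := mul_pos h1y hP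
    have hμval : μ (Set.Ioo (A t + x*B t) 1) = ENNReal.ofReal (Real.exp (1 - ((1-y)*P)^(-α))) := by
      rw [hform]
      exact hμ _ hu0 hu
    have hupow : ((1-y)*P)^(-α) = (1-y)^(-α) * L := by
      rw [Real.mul_rpow h1y.le hP.le, hPdef, ← Real.rpow_mul hL0.le,
        show (-(1/α))*(-α) = 1 by field_simp, Real.rpow_one]
    rw [hμval, ENNReal.toReal_ofReal (Real.exp_nonneg _), hts, ← Real.exp_add,
      Real.exp_le_exp, hupow, hxx, hx]
    -- goal: -(αLy) - (C₀+α/c+1)*(L*y²) ≤ L - 1 + (1 - (1-y)^(-α)*L)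
    have hk := hkey y hy1 hy2
    have hkL : L * ((1-y)^(-α)) ≤ L * (1 + α*y + C₀*y^2) :=
      mul_le_mul_of_nonneg_left hk hL0.le
    have hnn : 0 ≤ (α/c + 1) * (L * y^2) := by positivity
    nlinarith [hkL, hnn]
  · have h1u : A t + x * B t ≤ 0 := by rw [hform]; linarith
    have hμval : μ (Set.Ioo (A t + x*B t) 1) = 1 := by
      have h01 : μ (Set.Ioo (0:ℝ) 1) = 1 := by
        have h := hμ 1 one_pos le_rfl
        norm_num [Real.one_rpow] at h
        simpa using h
      refine le_antisymm MeasureTheory.prob_le_one ?_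
      calc (1:ENNReal) = μ (Set.Ioo (0:ℝ) 1) := h01.symm
      _ ≤ μ (Set.Ioo (A t + x*B t) 1) := μ.mono (Set.Ioo_subset_Ioo h1u le_rfl)
    rw [hμval, ENNReal.toReal_one, mul_one, hts, Real.exp_le_exp, hxx, hx]
    have hcy : c < -y := by
      have hPinv : P⁻¹ = L ^ ((1:ℝ)/α) := by
        rw [hPdef, ← Real.rpow_neg hL0.le, neg_neg]
      have h2L : (2:ℝ)^((1:ℝ)/α) ≤ L^((1:ℝ)/α) :=
        Real.rpow_le_rpow (by norm_num) hL (by positivity)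
      have h1yP : P⁻¹ < 1 - y := by
        rw [inv_eq_one_div, div_lt_iff₀ hP]; linarith
      rw [hcdef]
      have := hPinv ▸ h1yP
      linarith
    have hs : 0 < -y := lt_trans hc hcy
    have hac : α / c * c = α := div_mul_cancel₀ α (ne_of_gt hc)
    have h1 : α < (C₀ + α/c + 1) * (-y) := by
      have := mul_lt_mul_of_pos_left hcy (show (0:ℝ) < α/c by positivity)
      nlinarith [mul_pos hC₀ hs, hs]
    have h2 : α * (L * (-y)) < (C₀ + α/c + 1) * (-y) * (L * (-y)) :=
      mul_lt_mul_of_pos_right h1 (mul_pos hL0 hs)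
    linarith [h2, hL]
end

section
/- Consider the disordered Chinese restaurant process in continuous time: tables are created at the jump times τ_1 < τ_2 < … of a rate-θ Poisson process (with τ_0 = 0 and table 1 created at time 0), each table n carries an i.i.d. weight W_n with law μ on (0,∞), and the size of table n is Z_n(t) = Y_n(W_n(t−τ_n))·1_{t≥τ_n} for i.i.d. rate-1 Yule processes Y_n. If essup μ = a < ∞ and μ has no atom at a, then letting M(t) be the number of occupied tables and N(t) = Σ_n Z_n(t) the total number of customers, M(t)/log N(t) → θ/a almost surely as t→∞. If essup μ = ∞, then M(t)/log N(t) → 0 almost surely. -/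
open MeasureTheory ProbabilityTheory Filter Topology
open scoped ENNReal

lemma aux_tsum_ofReal_le {α : Type*} {m : MeasurableSpace α} (P : Measure α)
    {s : ℕ → Set α} {g : ℕ → ℝ} (hg0 : ∀ m, 0 ≤ g m) (hg : Summable g)
    (h : ∀ m, P (s m) ≤ ENNReal.ofReal (g m)) : ∑' m, P (s m) ≠ ∞ := by
  refine ne_top_of_le_ne_top ?_ (ENNReal.tsum_le_tsum h)
  rw [← ENNReal.ofReal_tsum_of_nonneg hg0 hg]
  exact ENNReal.ofReal_ne_top

lemma aux_summable_pow {r : ℝ} (h0 : 0 ≤ r) (h1 : r < 1) :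
    Summable (fun m : ℕ => (m + 1 : ℝ) * r ^ m) := by
  have h := summable_pow_mul_geometric_of_norm_lt_one (R := ℝ) 1 (r := r)
    (by rwa [Real.norm_eq_abs, abs_of_nonneg h0])
  simpa [add_mul, pow_one] using h.add (summable_geometric_of_lt_one h0 h1)


lemma aux_count {u : ℕ → ℝ} {c : ℝ} (hc : 0 < c) (h0 : u 0 = 0) (hmono : StrictMono u)
    (hlim : Tendsto (fun n : ℕ => u n / n) atTop (𝓝 c)) :
    ∃ F : ℝ → ℕ, (∀ t, {n : ℕ | u n ≤ t} = Set.Iio (F t)) ∧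
      Tendsto (fun t : ℝ => (F t : ℝ) / t) atTop (𝓝 c⁻¹) := by
  have utop : Tendsto u atTop atTop := by
    have h1 : Tendsto (fun n : ℕ => (u n / n) * n) atTop atTop :=
      Tendsto.pos_mul_atTop hc hlim tendsto_natCast_atTop_atTop
    refine h1.congr' ?_
    filter_upwards [eventually_ge_atTop 1] with n hn
    have : (n : ℝ) ≠ 0 := by positivity
    field_simp
  have hex : ∀ t : ℝ, ∃ n, t < u n := fun t => (utop.eventually_gt_atTop t).exists
  set F : ℝ → ℕ := fun t => Nat.find (hex t) with hF
  have hset : ∀ t, {n : ℕ | u n ≤ t} = Set.Iio (F t) := by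
    intro t
    ext n
    simp only [Set.mem_setOf_eq, Set.mem_Iio]
    constructor
    · intro h
      by_contra hn
      push_neg at hn
      exact absurd h (not_le.2 (lt_of_lt_of_le (Nat.find_spec (hex t)) (hmono.monotone hn)))
    · intro h
      exact not_lt.1 (Nat.find_min (hex t) h)
  have hF1 : ∀ t : ℝ, 0 ≤ t → 1 ≤ F t := by
    intro t ht
    have : (0 : ℕ) ∈ {n : ℕ | u n ≤ t} := by simp [h0, ht]
    rw [hset t] at this
    exact (by simpa using this : 0 < F t)
  have hFtop : Tendsto F atTop atTop := by
    refine tendsto_atTop.2 fun b => ?_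
    filter_upwards [eventually_ge_atTop (u b)] with t ht
    have : b ∈ {n : ℕ | u n ≤ t} := ht
    rw [hset t] at this
    exact le_of_lt this
  have hspec : ∀ t, t < u (F t) := fun t => Nat.find_spec (hex t)
  have hspec' : ∀ t : ℝ, 0 ≤ t → u (F t - 1) ≤ t := by
    intro t ht
    have h1 : F t - 1 ∈ Set.Iio (F t) := Set.mem_Iio.2 (Nat.sub_lt (hF1 t ht) one_pos)
    rw [← hset t] at h1
    exact h1
  -- limit of t / F t is c
  have hFR : Tendsto (fun t : ℝ => (F t : ℝ)) atTop atTop :=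
    tendsto_natCast_atTop_atTop.comp hFtop
  have hFpos : ∀ᶠ t : ℝ in atTop, (0 : ℝ) < F t := hFR.eventually_gt_atTop 0
  have hA : Tendsto (fun t : ℝ => u (F t) / (F t : ℝ)) atTop (𝓝 c) := hlim.comp hFtop
  have hsub : Tendsto (fun t : ℝ => F t - 1) atTop atTop :=
    (tendsto_sub_atTop_nat 1).comp hFtop
  have hB0 : Tendsto (fun t : ℝ => u (F t - 1) / ((F t - 1 : ℕ) : ℝ)) atTop (𝓝 c) :=
    hlim.comp hsub
  have hratio : Tendsto (fun t : ℝ => ((F t - 1 : ℕ) : ℝ) / (F t : ℝ)) atTop (𝓝 1) := by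
    have h1 : Tendsto (fun t : ℝ => 1 - ((F t : ℝ))⁻¹) atTop (𝓝 1) := by
      have := (tendsto_const_nhds (α := ℝ) (x := (1:ℝ))).sub
        (tendsto_inv_atTop_zero.comp hFR)
      simpa using this
    refine h1.congr' ?_
    filter_upwards [eventually_ge_atTop (0:ℝ), hFpos] with t ht htpos
    have h2 : 1 ≤ F t := hF1 t ht
    rw [Nat.cast_sub h2]
    push_cast
    field_simp
  have hB : Tendsto (fun t : ℝ => u (F t - 1) / (F t : ℝ)) atTop (𝓝 c) := by
    have := hB0.mul hratio
    rw [mul_one] at this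
    refine this.congr' ?_
    filter_upwards [hsub.eventually_gt_atTop 0] with t ht
    have : ((F t - 1 : ℕ) : ℝ) ≠ 0 := by positivity
    field_simp
  have hmid : Tendsto (fun t : ℝ => t / (F t : ℝ)) atTop (𝓝 c) := by
    refine tendsto_of_tendsto_of_tendsto_of_le_of_le' hB hA ?_ ?_
    · filter_upwards [eventually_ge_atTop (0:ℝ), hFpos] with t ht htpos
      exact div_le_div_of_nonneg_right (hspec' t ht) htpos.le
    · filter_upwards [hFpos] with t htpos
      exact div_le_div_of_nonneg_right (hspec t).le htpos.le
  exact ⟨F, hset, (hmid.inv₀ (ne_of_gt hc)).congr fun t => by rw [← one_div, one_div_div]⟩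


lemma yule_tail_ge {Ω : Type*} [MeasurableSpace Ω] (P : Measure Ω)
    (X : ℝ → Ω → ℕ)
    (hlaw : ∀ t : ℝ, 0 ≤ t → ∀ k : ℕ, 1 ≤ k → P {ω | X t ω = k} =
      ENNReal.ofReal (Real.exp (-t) * (1 - Real.exp (-t)) ^ (k - 1)))
    {t : ℝ} (ht : 0 < t) {K : ℕ} (hK : 1 ≤ K) :
    P {ω | K ≤ X t ω} ≤ ENNReal.ofReal ((1 - Real.exp (-t)) ^ (K - 1)) := by
  set q : ℝ := 1 - Real.exp (-t) with hq
  have hq0 : 0 ≤ q := by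
    have := Real.exp_le_one_iff.2 (by linarith : -t ≤ 0)
    linarith
  have hq1 : q < 1 := by
    have := Real.exp_pos (-t)
    simp only [hq]; linarith
  have hsub : {ω | K ≤ X t ω} ⊆ ⋃ j : ℕ, {ω | X t ω = K + j} := by
    intro ω hω
    simp only [Set.mem_setOf_eq] at hω
    exact Set.mem_iUnion.2 ⟨X t ω - K, by simp only [Set.mem_setOf_eq]; omega⟩
  calc P {ω | K ≤ X t ω} ≤ P (⋃ j : ℕ, {ω | X t ω = K + j}) := measure_mono hsub
    _ ≤ ∑' j : ℕ, P {ω | X t ω = K + j} := measure_iUnion_le _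
    _ = ∑' j : ℕ, ENNReal.ofReal ((Real.exp (-t) * q ^ (K - 1)) * q ^ j) := by
        refine tsum_congr fun j => ?_
        rw [hlaw t ht.le (K + j) (by omega)]
        congr 1
        have : K + j - 1 = (K - 1) + j := by omega
        rw [this, pow_add, mul_assoc]
    _ = ENNReal.ofReal (∑' j : ℕ, (Real.exp (-t) * q ^ (K - 1)) * q ^ j) := by
        rw [ENNReal.ofReal_tsum_of_nonneg]
        · intro j; positivity
        · exact (summable_geometric_of_lt_one hq0 hq1).mul_left _
    _ = ENNReal.ofReal (q ^ (K - 1)) := by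
        rw [tsum_mul_left, tsum_geometric_of_lt_one hq0 hq1]
        congr 1
        have h1 : (1 : ℝ) - q = Real.exp (-t) := by simp [hq]
        rw [h1]
        have := Real.exp_pos (-t)
        field_simp
  
lemma yule_tail_lt {Ω : Type*} [MeasurableSpace Ω] (P : Measure Ω)
    (X : ℝ → Ω → ℕ) {t : ℝ} (hX1 : ∀ ω, 1 ≤ X t ω)
    (hlaw : ∀ t : ℝ, 0 ≤ t → ∀ k : ℕ, 1 ≤ k → P {ω | X t ω = k} =
      ENNReal.ofReal (Real.exp (-t) * (1 - Real.exp (-t)) ^ (k - 1)))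
    (ht : 0 ≤ t) (K : ℕ) :
    P {ω | X t ω < K} ≤ (K : ℝ≥0∞) * ENNReal.ofReal (Real.exp (-t)) := by
  have hq0 : 0 ≤ 1 - Real.exp (-t) := by
    have := Real.exp_le_one_iff.2 (by linarith : -t ≤ 0); linarith
  have hq1 : 1 - Real.exp (-t) ≤ 1 := by have := Real.exp_pos (-t); linarith
  have hsub : {ω | X t ω < K} ⊆ ⋃ k ∈ Finset.Ico 1 K, {ω | X t ω = k} := by
    intro ω hω
    simp only [Set.mem_setOf_eq] at hω
    refine Set.mem_biUnion (Finset.mem_Ico.2 ⟨hX1 ω, hω⟩) rfl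
  calc P {ω | X t ω < K} ≤ P (⋃ k ∈ Finset.Ico 1 K, {ω | X t ω = k}) := measure_mono hsub
    _ ≤ ∑ k ∈ Finset.Ico 1 K, P {ω | X t ω = k} := measure_biUnion_finset_le _ _
    _ ≤ ∑ k ∈ Finset.Ico 1 K, ENNReal.ofReal (Real.exp (-t)) := by
        refine Finset.sum_le_sum fun k hk => ?_
        rw [hlaw t ht k (Finset.mem_Ico.1 hk).1]
        refine ENNReal.ofReal_le_ofReal ?_
        have h2 : (1 - Real.exp (-t)) ^ (k - 1) ≤ 1 := pow_le_one₀ hq0 hq1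
        nlinarith [Real.exp_pos (-t)]
    _ ≤ (K : ℝ≥0∞) * ENNReal.ofReal (Real.exp (-t)) := by
        rw [Finset.sum_const, nsmul_eq_mul]
        gcongr
        simp only [Nat.card_Ico]
        exact_mod_cast Nat.sub_le K 1


lemma exp_law_Iic {Ω : Type*} [MeasurableSpace Ω] (P : Measure Ω) [IsProbabilityMeasure P] {θ : ℝ}
    (X : Ω → ℝ) (hm : Measurable X)
    (hlaw : ∀ x : ℝ, 0 ≤ x → P {ω | x < X ω} = ENNReal.ofReal (Real.exp (-θ * x))) (x : ℝ) :
    Measure.map X P (Set.Iic x) = 1 - ENNReal.ofReal (Real.exp (-θ * max x 0)) := by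
  rw [Measure.map_apply hm measurableSet_Iic]
  have hc : X ⁻¹' Set.Iic x = {ω | x < X ω}ᶜ := by
    ext ω; simp [not_lt]
  rw [hc, prob_compl_eq_one_sub (measurableSet_lt measurable_const hm)]
  rcases le_or_gt 0 x with hx | hx
  · rw [hlaw x hx, max_eq_left hx]
  · have h1 : P {ω | x < X ω} = 1 := by
      refine le_antisymm prob_le_one ?_
      have h2 := hlaw 0 le_rfl
      simp only [mul_zero, Real.exp_zero, ENNReal.ofReal_one] at h2
      rw [← h2]
      exact measure_mono fun ω hω => lt_trans hx hω
    rw [h1, max_eq_right hx.le]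
    simp

lemma exp_law_integral {Ω : Type*} [MeasurableSpace Ω] (P : Measure Ω) [IsProbabilityMeasure P]
    {θ : ℝ} (hθ : 0 < θ) (X : Ω → ℝ) (hm : Measurable X)
    (hlaw : ∀ x : ℝ, 0 ≤ x → P {ω | x < X ω} = ENNReal.ofReal (Real.exp (-θ * x))) :
    Integrable X P ∧ ∫ ω, X ω ∂P = 1 / θ := by
  have hae : 0 ≤ᵐ[P] X := by
    have h2 := hlaw 0 le_rfl
    simp only [mul_zero, Real.exp_zero, ENNReal.ofReal_one] at h2
    have h3 : P {ω | 0 < X ω}ᶜ = 0 := by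
      rw [prob_compl_eq_one_sub (measurableSet_lt measurable_const hm), h2]
      simp
    have h4 : ∀ᵐ ω ∂P, 0 < X ω := ae_iff.2 h3
    exact h4.mono fun ω h => h.le
  have hIval : ∫ t in Set.Ioi (0:ℝ), Real.exp (-θ * t) = 1 / θ := by
    have h := Real.integral_rpow_mul_exp_neg_mul_Ioi (a := 1) (r := θ) one_pos hθ
    simp only [sub_self, Real.rpow_zero, one_mul, Real.rpow_one, Real.Gamma_one, mul_one] at h
    rw [← h]
    refine setIntegral_congr_fun measurableSet_Ioi fun t ht => by rw [neg_mul]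
  have hInt : IntegrableOn (fun t : ℝ => Real.exp (-θ * t)) (Set.Ioi 0) :=
    exp_neg_integrableOn_Ioi 0 hθ
  have key : ∫⁻ ω, ENNReal.ofReal (X ω) ∂P = ENNReal.ofReal (1 / θ) := by
    rw [lintegral_eq_lintegral_meas_lt P hae hm.aemeasurable]
    have h1 : ∫⁻ t in Set.Ioi (0:ℝ), P {a | t < X a} =
        ∫⁻ t in Set.Ioi (0:ℝ), ENNReal.ofReal (Real.exp (-θ * t)) := by
      refine setLIntegral_congr_fun measurableSet_Ioi (fun t ht => hlaw t (le_of_lt ht))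
    rw [h1, ← ofReal_integral_eq_lintegral_ofReal hInt (ae_of_all _ fun t => (Real.exp_pos _).le),
      hIval]
  have hfin : Integrable X P := by
    refine ⟨hm.aestronglyMeasurable, ?_⟩
    rw [hasFiniteIntegral_iff_ofReal hae, key]
    exact ENNReal.ofReal_lt_top
  refine ⟨hfin, ?_⟩
  rw [integral_eq_lintegral_of_nonneg_ae hae hm.aestronglyMeasurable, key,
    ENNReal.toReal_ofReal (by positivity)]


lemma omega_low {q c : ℝ} (hq : 0 < q) (hc : c < q) (n₀ : ℕ) (w τv : ℕ → ℝ) (y : ℕ → ℝ → ℕ)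
    (z : ℕ → ℝ → ℕ) (Nv : ℝ → ℝ) (F : ℝ → ℕ)
    (hymono : ∀ n ⦃s t : ℝ⦄, 0 ≤ s → s ≤ t → y n s ≤ y n t)
    (hz : ∀ n t, z n t = if τv n ≤ t then y n (w n * (t - τv n)) else 0)
    (hFset : ∀ t, {n : ℕ | τv n ≤ t} = Set.Iio (F t))
    (hNsum : ∀ t, Nv t = ∑ n ∈ Finset.range (F t), (z n t : ℝ))
    (hwn : q < w n₀)
    (hylow : ∀ j : ℕ, ∀ᶠ m : ℕ in atTop, Real.exp ((1 - 1/(j+1)) * m) ≤ (y n₀ m : ℝ)) :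
    ∀ᶠ t : ℝ in atTop, c * t ≤ Real.log (Nv t) := by
  -- pick j with (1 - 1/(j+1)) * q > c
  obtain ⟨j, hj⟩ : ∃ j : ℕ, c < (1 - 1/((j:ℝ)+1)) * q := by
    have h1 : Tendsto (fun j : ℕ => (1 - 1/((j:ℝ)+1)) * q) atTop (𝓝 ((1 - 0) * q)) :=
      (tendsto_const_nhds.sub tendsto_one_div_add_atTop_nhds_zero_nat).mul tendsto_const_nhds
    simp only [sub_zero, one_mul] at h1
    exact (h1.eventually (eventually_gt_nhds hc)).exists
  set ε : ℝ := 1/((j:ℝ)+1) with hε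
  have hε0 : 0 < ε := by positivity
  have hε1 : ε ≤ 1 := by
    rw [hε, div_le_one (by positivity)]
    simp
  have h1ε : 0 ≤ 1 - ε := by linarith
  have hw0 : 0 < w n₀ := lt_trans hq hwn
  set s : ℝ → ℝ := fun t => w n₀ * (t - τv n₀) with hs
  have hstop : Tendsto s atTop atTop :=
    (tendsto_atTop_add_const_right atTop (-τv n₀) tendsto_id).const_mul_atTop hw0
  have hfloor : Tendsto (fun t => ⌊s t⌋₊) atTop atTop := tendsto_nat_floor_atTop.comp hstop
  have hev1 : ∀ᶠ t : ℝ in atTop, Real.exp ((1 - ε) * ⌊s t⌋₊) ≤ (y n₀ ⌊s t⌋₊ : ℝ) :=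
    hfloor.eventually (hylow j)
  have hev2 : ∀ᶠ t : ℝ in atTop, τv n₀ ≤ t := eventually_ge_atTop _
  have hev3 : ∀ᶠ t : ℝ in atTop, (1 - ε) * (q * (τv n₀) + 1) ≤ ((1 - ε) * q - c) * t := by
    have hcoef : 0 < (1 - ε) * q - c := by linarith
    exact ((tendsto_id.const_mul_atTop hcoef).eventually_ge_atTop _)
  filter_upwards [hev1, hev2, hev3] with t h1 h2 h3
  have hst : 0 ≤ s t := by
    have : 0 ≤ t - τv n₀ := by linarith
    positivity
  have hn₀F : n₀ ∈ Finset.range (F t) := by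
    have : n₀ ∈ {n : ℕ | τv n ≤ t} := h2
    rw [hFset t] at this
    simpa using this
  have hzN : (z n₀ t : ℝ) ≤ Nv t := by
    rw [hNsum t]
    exact Finset.single_le_sum (f := fun n => (z n t : ℝ)) (fun i _ => by positivity) hn₀F
  have hyz : (y n₀ ⌊s t⌋₊ : ℝ) ≤ (z n₀ t : ℝ) := by
    rw [hz n₀ t, if_pos h2]
    exact_mod_cast hymono n₀ (Nat.cast_nonneg _) (Nat.floor_le hst)
  have hexpN : Real.exp ((1 - ε) * ⌊s t⌋₊) ≤ Nv t := le_trans h1 (le_trans hyz hzN)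
  have hlog : (1 - ε) * ⌊s t⌋₊ ≤ Real.log (Nv t) := by
    have := Real.log_le_log (Real.exp_pos _) hexpN
    rwa [Real.log_exp] at this
  refine le_trans ?_ hlog
  have hfl : s t - 1 ≤ (⌊s t⌋₊ : ℝ) := (Nat.sub_one_lt_floor (s t)).le
  have hsq : q * (t - τv n₀) ≤ s t := by
    have : 0 ≤ t - τv n₀ := by linarith
    exact mul_le_mul_of_nonneg_right hwn.le this
  calc c * t ≤ (1 - ε) * (q * (t - τv n₀) - 1) := by nlinarith
    _ ≤ (1 - ε) * (s t - 1) := by nlinarith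
    _ ≤ (1 - ε) * ⌊s t⌋₊ := by nlinarith



lemma omega_setup {θ : ℝ} (hθ : 0 < θ) (w τv : ℕ → ℝ) (y : ℕ → ℝ → ℕ) (z : ℕ → ℝ → ℕ)
    (Nv : ℝ → ℝ)
    (hy0 : ∀ n, y n 0 = 1)
    (hymono : ∀ n ⦃s t : ℝ⦄, 0 ≤ s → s ≤ t → y n s ≤ y n t)
    (hz : ∀ n t, z n t = if τv n ≤ t then y n (w n * (t - τv n)) else 0)
    (hNv : ∀ t, Nv t = ∑' n, (z n t : ℝ))
    (hτ0 : τv 0 = 0) (hτmono : StrictMono τv)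
    (hτlim : Tendsto (fun n : ℕ => τv n / n) atTop (𝓝 (1/θ)))
    (hwpos : ∀ n, 0 < w n) :
    ∃ F : ℝ → ℕ,
      (∀ t, {n : ℕ | τv n ≤ t} = Set.Iio (F t)) ∧
      (∀ t, Nv t = ∑ n ∈ Finset.range (F t), (z n t : ℝ)) ∧
      Tendsto (fun t : ℝ => (F t : ℝ) / t) atTop (𝓝 θ) ∧
      (∀ t, 0 ≤ t → 1 ≤ Nv t) ∧
      (∀ s t : ℝ, s ≤ t → Nv s ≤ Nv t) := by
  have hτpos : ∀ n, 0 ≤ τv n := fun n => hτ0 ▸ hτmono.monotone (Nat.zero_le n)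
  obtain ⟨F, hFset, hFlim⟩ := aux_count (by positivity : (0:ℝ) < 1/θ) hτ0 hτmono hτlim
  have hFlim' : Tendsto (fun t : ℝ => (F t : ℝ) / t) atTop (𝓝 θ) := by
    rwa [one_div, inv_inv] at hFlim
  have hzero : ∀ t : ℝ, ∀ n ∉ Finset.range (F t), (z n t : ℝ) = 0 := by
    intro t n hn
    rw [Finset.mem_range] at hn
    have : n ∉ Set.Iio (F t) := by simpa using hn
    rw [← hFset t] at this
    simp only [Set.mem_setOf_eq] at this
    rw [hz n t, if_neg this, Nat.cast_zero]
  have hNsum : ∀ t, Nv t = ∑ n ∈ Finset.range (F t), (z n t : ℝ) := by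
    intro t
    rw [hNv t]
    exact tsum_eq_sum (hzero t)
  have hFmono : ∀ s t : ℝ, s ≤ t → F s ≤ F t := by
    intro s t hst
    have hsub : Set.Iio (F s) ⊆ Set.Iio (F t) := by
      rw [← hFset s, ← hFset t]
      exact fun n hn => le_trans hn hst
    by_contra h
    push_neg at h
    exact lt_irrefl (F t) (hsub h)
  have hzmono : ∀ n, ∀ s t : ℝ, s ≤ t → (z n s : ℝ) ≤ (z n t : ℝ) := by
    intro n s t hst
    rw [hz n s, hz n t]
    by_cases h1 : τv n ≤ s
    · rw [if_pos h1, if_pos (le_trans h1 hst)]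
      have h2 : 0 ≤ w n * (s - τv n) := mul_nonneg (hwpos n).le (by linarith)
      have h3 : w n * (s - τv n) ≤ w n * (t - τv n) := by
        have := (hwpos n).le
        nlinarith
      exact_mod_cast hymono n h2 h3
    · rw [if_neg h1]
      exact_mod_cast Nat.zero_le _
  have hNmono : ∀ s t : ℝ, s ≤ t → Nv s ≤ Nv t := by
    intro s t hst
    rw [hNsum s, hNsum t]
    calc ∑ n ∈ Finset.range (F s), (z n s : ℝ)
        = ∑ n ∈ Finset.range (F t), (z n s : ℝ) := by
          refine Finset.sum_subset (Finset.range_subset_range.2 (hFmono s t hst)) ?_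
          intro n hnt hns
          have : n ∉ Set.Iio (F s) := by simpa using hns
          rw [← hFset s] at this
          simp only [Set.mem_setOf_eq] at this
          rw [hz n s, if_neg this, Nat.cast_zero]
      _ ≤ ∑ n ∈ Finset.range (F t), (z n t : ℝ) :=
          Finset.sum_le_sum fun n _ => hzmono n s t hst
  have hN1 : ∀ t, 0 ≤ t → 1 ≤ Nv t := by
    intro t ht
    have h0mem : (0:ℕ) ∈ Finset.range (F t) := by
      have : (0:ℕ) ∈ {n : ℕ | τv n ≤ t} := by simp [hτ0, ht]
      rw [hFset t] at this
      simpa using this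
    have hz0 : (1:ℝ) ≤ (z 0 t : ℝ) := by
      rw [hz 0 t, if_pos (by simpa [hτ0] using ht)]
      have h2 : 0 ≤ w 0 * (t - τv 0) := by
        rw [hτ0, sub_zero]
        exact mul_nonneg (hwpos 0).le ht
      have := hymono 0 le_rfl h2
      rw [hy0 0] at this
      exact_mod_cast this
    rw [hNsum t]
    exact le_trans hz0 (Finset.single_le_sum (f := fun n => (z n t : ℝ))
      (fun i _ => by positivity) h0mem)
  exact ⟨F, hFset, hNsum, hFlim', hN1, hNmono⟩

lemma div_div_div_self {x y t : ℝ} (ht : t ≠ 0) : (x / t) / (y / t) = x / y := by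
  rw [div_div_div_comm, div_self ht]
  simp

lemma omega_case2 {θ : ℝ} (hθ : 0 < θ) (w τv : ℕ → ℝ) (y : ℕ → ℝ → ℕ) (z : ℕ → ℝ → ℕ)
    (Mv : ℝ → ℕ) (Nv : ℝ → ℝ)
    (hy0 : ∀ n, y n 0 = 1)
    (hymono : ∀ n ⦃s t : ℝ⦄, 0 ≤ s → s ≤ t → y n s ≤ y n t)
    (hz : ∀ n t, z n t = if τv n ≤ t then y n (w n * (t - τv n)) else 0)
    (hMv : ∀ t, Mv t = Set.ncard {n : ℕ | τv n ≤ t})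
    (hNv : ∀ t, Nv t = ∑' n, (z n t : ℝ))
    (hτ0 : τv 0 = 0) (hτmono : StrictMono τv)
    (hτlim : Tendsto (fun n : ℕ => τv n / n) atTop (𝓝 (1/θ)))
    (hwpos : ∀ n, 0 < w n)
    (hylow : ∀ n j : ℕ, ∀ᶠ m : ℕ in atTop, Real.exp ((1 - 1/((j:ℝ)+1)) * m) ≤ (y n m : ℝ))
    (hwsup : ∀ k : ℕ, ∃ n, (k:ℝ) < w n) :
    Tendsto (fun t => (Mv t : ℝ) / Real.log (Nv t)) atTop (𝓝 0) := by
  obtain ⟨F, hFset, hNsum, hFlim, hN1, hNmono⟩ :=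
    omega_setup hθ w τv y z Nv hy0 hymono hz hNv hτ0 hτmono hτlim hwpos
  have hMF : ∀ t, (Mv t : ℝ) = (F t : ℝ) := by
    intro t
    rw [hMv, hFset, ← Finset.coe_range, Set.ncard_coe_finset, Finset.card_range]
  have hMlim : Tendsto (fun t : ℝ => (Mv t : ℝ) / t) atTop (𝓝 θ) := by
    refine hFlim.congr fun t => ?_
    rw [hMF]
  have Hlo : ∀ c : ℝ, ∀ᶠ t : ℝ in atTop, c * t ≤ Real.log (Nv t) := by
    intro c
    set k : ℕ := ⌈max c 0⌉₊ + 1 with hkdef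
    have hk1 : max c 0 < (k:ℝ) := by
      have h1 := Nat.le_ceil (max c 0)
      simp only [hkdef]
      push_cast
      linarith
    have hq : 0 < ((k:ℕ):ℝ) := lt_of_le_of_lt (le_max_right c 0) hk1
    have hcq : c < ((k:ℕ):ℝ) := lt_of_le_of_lt (le_max_left c 0) hk1
    obtain ⟨n₀, hn₀⟩ := hwsup k
    exact omega_low hq hcq n₀ w τv y z Nv F hymono hz hFset hNsum hn₀ (hylow n₀)
  have hNtop : Tendsto (fun t : ℝ => Real.log (Nv t) / t) atTop atTop := by
    refine tendsto_atTop.2 fun b => ?_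
    filter_upwards [Hlo b, eventually_gt_atTop (0:ℝ)] with t h1 h2
    rw [le_div_iff₀ h2]
    exact h1
  have hfin : ∀ᶠ t : ℝ in atTop,
      ((Mv t : ℝ) / t) / (Real.log (Nv t) / t) = (Mv t : ℝ) / Real.log (Nv t) := by
    filter_upwards [eventually_gt_atTop (0:ℝ)] with t ht
    exact div_div_div_self (ne_of_gt ht)
  exact Tendsto.congr' hfin (hMlim.div_atTop hNtop)

lemma omega_case1 {θ a : ℝ} (hθ : 0 < θ) (ha : 0 < a) (w τv : ℕ → ℝ) (y : ℕ → ℝ → ℕ)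
    (z : ℕ → ℝ → ℕ) (Mv : ℝ → ℕ) (Nv : ℝ → ℝ)
    (hy0 : ∀ n, y n 0 = 1)
    (hymono : ∀ n ⦃s t : ℝ⦄, 0 ≤ s → s ≤ t → y n s ≤ y n t)
    (hz : ∀ n t, z n t = if τv n ≤ t then y n (w n * (t - τv n)) else 0)
    (hMv : ∀ t, Mv t = Set.ncard {n : ℕ | τv n ≤ t})
    (hNv : ∀ t, Nv t = ∑' n, (z n t : ℝ))
    (hτ0 : τv 0 = 0) (hτmono : StrictMono τv)
    (hτlim : Tendsto (fun n : ℕ => τv n / n) atTop (𝓝 (1/θ)))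
    (hwpos : ∀ n, 0 < w n) (hwle : ∀ n, w n ≤ a)
    (hylow : ∀ n j : ℕ, ∀ᶠ m : ℕ in atTop, Real.exp ((1 - 1/((j:ℝ)+1)) * m) ≤ (y n m : ℝ))
    (hyup : ∀ j : ℕ, ∀ᶠ m : ℕ in atTop, ∀ n < (⌈θ⌉₊ + 1) * (m + 1),
        (y n (a * m) : ℝ) ≤ Real.exp ((a + 1/((j:ℝ)+1)) * m) + 1)
    (hwsup : ∀ q : ℚ, 0 < (q:ℝ) → (q:ℝ) < a → ∃ n, (q:ℝ) < w n) :
    Tendsto (fun t => (Mv t : ℝ) / Real.log (Nv t)) atTop (𝓝 (θ / a)) := by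
  obtain ⟨F, hFset, hNsum, hFlim, hN1, hNmono⟩ :=
    omega_setup hθ w τv y z Nv hy0 hymono hz hNv hτ0 hτmono hτlim hwpos
  have hτpos : ∀ n, 0 ≤ τv n := fun n => hτ0 ▸ hτmono.monotone (Nat.zero_le n)
  have hMF : ∀ t, (Mv t : ℝ) = (F t : ℝ) := by
    intro t
    rw [hMv, hFset, ← Finset.coe_range, Set.ncard_coe_finset, Finset.card_range]
  have hMlim : Tendsto (fun t : ℝ => (Mv t : ℝ) / t) atTop (𝓝 θ) := by
    refine hFlim.congr fun t => ?_
    rw [hMF]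
  -- lower bound
  have Hlo : ∀ c : ℝ, c < a → ∀ᶠ t : ℝ in atTop, c * t ≤ Real.log (Nv t) := by
    intro c hc
    have hm0 : 0 ≤ max c 0 := le_max_right c 0
    have hma : max c 0 < a := max_lt hc ha
    obtain ⟨q, hq1, hq2⟩ := exists_rat_btwn hma
    have hq : 0 < (q:ℝ) := lt_of_le_of_lt hm0 hq1
    have hcq : c < (q:ℝ) := lt_of_le_of_lt (le_max_left c 0) hq1
    obtain ⟨n₀, hn₀⟩ := hwsup q hq hq2
    exact omega_low hq hcq n₀ w τv y z Nv F hymono hz hFset hNsum hn₀ (hylow n₀)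
  -- upper bound
  set D : ℕ := ⌈θ⌉₊ + 1 with hD
  have Hup : ∀ c : ℝ, a < c → ∀ᶠ t : ℝ in atTop, Real.log (Nv t) ≤ c * t := by
    intro c hc
    obtain ⟨j, hj⟩ : ∃ j : ℕ, a + 2 * (1/((j:ℝ)+1)) < c := by
      have h1 : Tendsto (fun j : ℕ => a + 2 * (1/((j:ℝ)+1))) atTop (𝓝 (a + 2 * 0)) :=
        tendsto_const_nhds.add (tendsto_one_div_add_atTop_nhds_zero_nat.const_mul 2)
      simp only [mul_zero, add_zero] at h1
      exact (h1.eventually (eventually_lt_nhds hc)).exists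
    set ε : ℝ := 1/((j:ℝ)+1) with hε
    have hε0 : 0 < ε := by positivity
    -- eventual bound on F over naturals
    have hFlimN : Tendsto (fun m : ℕ => (F (m:ℝ) : ℝ) / (m:ℝ)) atTop (𝓝 θ) :=
      hFlim.comp tendsto_natCast_atTop_atTop
    have hFbound : ∀ᶠ m : ℕ in atTop, F (m:ℝ) ≤ D * (m + 1) := by
      filter_upwards [hFlimN.eventually (eventually_le_nhds (lt_add_one θ)),
        eventually_ge_atTop 1] with m h1 h2
      have hm0 : (0:ℝ) < (m:ℝ) := by exact_mod_cast h2
      rw [div_le_iff₀ hm0] at h1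
      have h3 : (F (m:ℝ) : ℝ) ≤ (D : ℝ) * ((m:ℝ) + 1) := by
        have hθD : θ + 1 ≤ (D:ℝ) := by
          have := Nat.le_ceil θ
          simp only [hD]
          push_cast
          linarith
        nlinarith [show (0:ℝ) ≤ ((F (m:ℝ)):ℝ) from Nat.cast_nonneg _]
      have h4 : ((F (m:ℝ)) : ℝ) ≤ ((D * (m + 1) : ℕ) : ℝ) := by push_cast; push_cast at h3; linarith
      exact_mod_cast h4
    -- eventual bound 2*D*(m+1) ≤ exp (ε * m)
    have hexp : ∀ᶠ m : ℕ in atTop, 2 * (D:ℝ) * (m + 1) ≤ Real.exp (ε * m) := by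
      have h1 : Tendsto (fun x : ℝ => Real.exp x / x) atTop atTop := by
        simpa using Real.tendsto_exp_div_pow_atTop 1
      have h2 : Tendsto (fun m : ℕ => ε * ((m:ℝ) + 1)) atTop atTop := by
        refine Tendsto.const_mul_atTop hε0 ?_
        exact tendsto_atTop_add_const_right _ 1 tendsto_natCast_atTop_atTop
      have h3 : Tendsto (fun m : ℕ => Real.exp (ε * ((m:ℝ)+1)) / (ε * ((m:ℝ)+1)))
          atTop atTop := h1.comp h2
      have h4 : Tendsto (fun m : ℕ => Real.exp (ε * (m:ℝ)) / ((m:ℝ)+1)) atTop atTop := by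
        have h5 := h3.const_mul_atTop (show (0:ℝ) < ε * Real.exp (-ε) by positivity)
        refine h5.congr' ?_
        filter_upwards [eventually_ge_atTop 0] with m _
        have hm1 : (0:ℝ) < (m:ℝ) + 1 := by positivity
        have hsplit : Real.exp (ε*((m:ℝ)+1)) = Real.exp (ε*(m:ℝ)) * Real.exp ε := by
          rw [← Real.exp_add]; ring_nf
        rw [hsplit, Real.exp_neg]
        have hεne : ε ≠ 0 := ne_of_gt hε0
        have hm1ne : ((m:ℝ)+1) ≠ 0 := ne_of_gt hm1
        have hexpne : Real.exp ε ≠ 0 := (Real.exp_pos ε).ne'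
        field_simp
      filter_upwards [h4.eventually_ge_atTop (2 * (D:ℝ))] with m h5
      have hm1 : (0:ℝ) < (m:ℝ) + 1 := by positivity
      rw [le_div_iff₀ hm1] at h5
      linarith
    -- eventual bound on N over naturals
    have hNbound : ∀ᶠ m : ℕ in atTop, Nv (m:ℝ) ≤ Real.exp ((a + 2*ε) * m) := by
      filter_upwards [hFbound, hexp, hyup j] with m h1 h2 h3
      have hmm : (0:ℝ) ≤ (m:ℝ) := Nat.cast_nonneg m
      have hterm : ∀ n ∈ Finset.range (F (m:ℝ)), (z n (m:ℝ) : ℝ) ≤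
          Real.exp ((a + ε) * m) + 1 := by
        intro n hn
        rw [Finset.mem_range] at hn
        have hτn : τv n ≤ (m:ℝ) := by
          have : n ∈ Set.Iio (F (m:ℝ)) := hn
          rw [← hFset (m:ℝ)] at this
          exact this
        have hynm : (z n (m:ℝ) : ℝ) ≤ (y n (a * m) : ℝ) := by
          rw [hz n (m:ℝ), if_pos hτn]
          have harg0 : 0 ≤ w n * ((m:ℝ) - τv n) := mul_nonneg (hwpos n).le (by linarith)
          have harg1 : w n * ((m:ℝ) - τv n) ≤ a * m := by
            have h5 : w n * ((m:ℝ) - τv n) ≤ a * ((m:ℝ) - τv n) :=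
              mul_le_mul_of_nonneg_right (hwle n) (by linarith)
            have h6 : a * ((m:ℝ) - τv n) ≤ a * m :=
              mul_le_mul_of_nonneg_left (by linarith [hτpos n]) ha.le
            linarith
          exact_mod_cast hymono n harg0 harg1
        exact hynm.trans (h3 n (lt_of_lt_of_le hn h1))
      calc Nv (m:ℝ) = ∑ n ∈ Finset.range (F (m:ℝ)), (z n (m:ℝ) : ℝ) := hNsum _
        _ ≤ ∑ _n ∈ Finset.range (F (m:ℝ)), (Real.exp ((a + ε) * m) + 1) :=
            Finset.sum_le_sum hterm
        _ = (F (m:ℝ) : ℝ) * (Real.exp ((a + ε) * m) + 1) := by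
            rw [Finset.sum_const, Finset.card_range, nsmul_eq_mul]
        _ ≤ ((D * (m+1) : ℕ) : ℝ) * (Real.exp ((a + ε) * m) + 1) := by
            have hpos : (0:ℝ) ≤ Real.exp ((a + ε) * m) + 1 := by positivity
            exact mul_le_mul_of_nonneg_right (by exact_mod_cast h1) hpos
        _ ≤ (D : ℝ) * ((m:ℝ)+1) * (2 * Real.exp ((a + ε) * m)) := by
            have he1 : (1:ℝ) ≤ Real.exp ((a + ε) * m) :=
              Real.one_le_exp (by positivity)
            have hD0 : (0:ℝ) ≤ (D:ℝ) * ((m:ℝ)+1) := by positivity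
            have : ((D * (m+1) : ℕ) : ℝ) = (D:ℝ) * ((m:ℝ)+1) := by push_cast; ring
            rw [this]
            nlinarith
        _ ≤ Real.exp (ε * m) * Real.exp ((a + ε) * m) := by
            have hpos : (0:ℝ) < Real.exp ((a + ε) * m) := Real.exp_pos _
            nlinarith
        _ = Real.exp ((a + 2*ε) * m) := by
            rw [← Real.exp_add]
            congr 1
            ring
    -- transfer to real times
    have hceil : Tendsto (fun t : ℝ => ⌈t⌉₊) atTop atTop := tendsto_nat_ceil_atTop
    have hlin : ∀ᶠ t : ℝ in atTop, (a + 2*ε) * (t + 1) ≤ c * t := by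
      have hcoef : 0 < c - (a + 2*ε) := by simp only [hε]; linarith
      filter_upwards [(tendsto_id.const_mul_atTop hcoef).eventually_ge_atTop (a + 2*ε),
        eventually_ge_atTop (0:ℝ)] with t h1 h2
      simp only [id_eq] at h1
      nlinarith
    filter_upwards [hceil.eventually hNbound, eventually_ge_atTop (0:ℝ), hlin] with t h1 h2 h3
    have hNt : Nv t ≤ Real.exp ((a + 2*ε) * ⌈t⌉₊) := le_trans (hNmono t _ (Nat.le_ceil t)) h1
    have hNpos : 0 < Nv t := lt_of_lt_of_le one_pos (hN1 t h2)
    have hlog : Real.log (Nv t) ≤ (a + 2*ε) * ⌈t⌉₊ := by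
      have := Real.log_le_log hNpos hNt
      rwa [Real.log_exp] at this
    refine hlog.trans (le_trans ?_ h3)
    have hc1 : (⌈t⌉₊ : ℝ) ≤ t + 1 := (Nat.ceil_lt_add_one h2).le
    have hcoef0 : 0 ≤ a + 2*ε := by positivity
    nlinarith
  -- combine into limit of log N / t
  have hNlim : Tendsto (fun t : ℝ => Real.log (Nv t) / t) atTop (𝓝 a) := by
    rw [Metric.tendsto_nhds]
    intro ε hε
    filter_upwards [Hlo (a - ε/2) (by linarith), Hup (a + ε/2) (by linarith),
      eventually_ge_atTop (1:ℝ)] with t h1 h2 h3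
    have ht0 : 0 < t := lt_of_lt_of_le one_pos h3
    rw [Real.dist_eq, abs_lt]
    have d1 : a - ε/2 ≤ Real.log (Nv t) / t := by rw [le_div_iff₀ ht0]; linarith
    have d2 : Real.log (Nv t) / t ≤ a + ε/2 := by rw [div_le_iff₀ ht0]; linarith
    constructor <;> linarith
  -- combine
  have hfin : ∀ᶠ t : ℝ in atTop,
      ((Mv t : ℝ) / t) / (Real.log (Nv t) / t) = (Mv t : ℝ) / Real.log (Nv t) := by
    filter_upwards [eventually_gt_atTop (0:ℝ)] with t ht
    exact div_div_div_self (ne_of_gt ht)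
  exact Tendsto.congr' hfin (hMlim.div hNlim (ne_of_gt ha))

/-- Continuous-time disordered Chinese restaurant process: tables are created at the
partial sums `τ_n` of i.i.d. rate-`θ` exponentials (so table `0` is created at time `0`),
table `n` carries weight `W_n` i.i.d. with law `μ` on `(0,∞)`, and its size is
`Z_n(t) = Y_n(W_n (t - τ_n)) 1_{t ≥ τ_n}` for i.i.d. rate-1 Yule processes `Y_n`,
all families jointly independent. With `M(t)` the number of occupied tables and
`N(t) = Σ_n Z_n(t)`: if `essup μ = a < ∞` and `μ{a} = 0` then
`M(t)/log N(t) → θ/a` a.s.; if `essup μ = ∞` then `M(t)/log N(t) → 0` a.s. -/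
theorem crp_number_of_tables_vs_log_customers
    {Ω : Type*} [MeasurableSpace Ω] (P : Measure Ω) [IsProbabilityMeasure P]
    (θ : ℝ) (hθ : 0 < θ)
    (μ : Measure ℝ) [IsProbabilityMeasure μ] (hμsupp : μ (Set.Iic 0) = 0)
    (W : ℕ → Ω → ℝ) (hWmeas : ∀ n, Measurable (W n))
    (hWlaw : ∀ n, Measure.map (W n) P = μ)
    (E : ℕ → Ω → ℝ) (hEmeas : ∀ n, Measurable (E n))
    (hElaw : ∀ n, ∀ x : ℝ, 0 ≤ x → P {ω | x < E n ω} = ENNReal.ofReal (Real.exp (-θ * x)))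
    (τ : ℕ → Ω → ℝ) (hτ : ∀ n ω, τ n ω = ∑ i ∈ Finset.range n, E i ω)
    (Y : ℕ → ℝ → Ω → ℕ)
    (hY0 : ∀ n ω, Y n 0 ω = 1)
    (hYmono : ∀ n ω ⦃s t : ℝ⦄, 0 ≤ s → s ≤ t → Y n s ω ≤ Y n t ω)
    (hYlaw : ∀ n, ∀ t : ℝ, 0 ≤ t → ∀ k : ℕ, 1 ≤ k →
      P {ω | Y n t ω = k} =
        ENNReal.ofReal (Real.exp (-t) * (1 - Real.exp (-t)) ^ (k - 1)))
    (hindep : iIndep (fun i : ℕ ⊕ ℕ ⊕ ℕ =>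
      Sum.elim (fun n => MeasurableSpace.comap (W n) inferInstance)
        (Sum.elim (fun n => MeasurableSpace.comap (E n) inferInstance)
          (fun n => MeasurableSpace.comap (fun ω s => Y n s ω) inferInstance)) i) P)
    (Z : ℕ → ℝ → Ω → ℕ)
    (hZ : ∀ n t ω, Z n t ω = if τ n ω ≤ t then Y n (W n ω * (t - τ n ω)) ω else 0)
    (Mt : ℝ → Ω → ℕ) (hM : ∀ t ω, Mt t ω = Set.ncard {n : ℕ | τ n ω ≤ t})
    (Nt : ℝ → Ω → ℝ) (hN : ∀ t ω, Nt t ω = ∑' n, (Z n t ω : ℝ)) :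
    (∀ a : ℝ, μ (Set.Ioi a) = 0 → (∀ b : ℝ, b < a → 0 < μ (Set.Ioi b)) → μ {a} = 0 →
      ∀ᵐ ω ∂P, Tendsto (fun t => (Mt t ω : ℝ) / Real.log (Nt t ω)) atTop (nhds (θ / a))) ∧
    ((∀ b : ℝ, 0 < μ (Set.Ioi b)) →
      ∀ᵐ ω ∂P, Tendsto (fun t => (Mt t ω : ℝ) / Real.log (Nt t ω)) atTop (nhds 0)) := by
  -- E basics
  have hEpos : ∀ᵐ ω ∂P, ∀ n, 0 < E n ω := by
    rw [ae_all_iff]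
    intro n
    have h2 := hElaw n 0 le_rfl
    simp only [mul_zero, Real.exp_zero, ENNReal.ofReal_one] at h2
    refine ae_iff.2 ?_
    have hc : {ω | ¬ 0 < E n ω} = {ω | 0 < E n ω}ᶜ := rfl
    rw [hc, prob_compl_eq_one_sub (measurableSet_lt measurable_const (hEmeas n)), h2]
    simp
  have hEindep : Pairwise (Function.onFun (IndepFun · · P) E) := by
    intro i j hij
    have h := hindep.indep (i := Sum.inr (Sum.inl i)) (j := Sum.inr (Sum.inl j))
      (by simp [hij])
    show IndepFun (E i) (E j) P
    rw [IndepFun_iff_Indep]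
    exact h
  have hident : ∀ n, IdentDistrib (E n) (E 0) P P := by
    intro n
    refine ⟨(hEmeas n).aemeasurable, (hEmeas 0).aemeasurable, ?_⟩
    haveI : IsProbabilityMeasure (Measure.map (E n) P) :=
      Measure.isProbabilityMeasure_map (hEmeas n).aemeasurable
    haveI : IsProbabilityMeasure (Measure.map (E 0) P) :=
      Measure.isProbabilityMeasure_map (hEmeas 0).aemeasurable
    refine MeasureTheory.Measure.ext_of_Iic _ _ fun x => ?_
    rw [exp_law_Iic P (E n) (hEmeas n) (hElaw n) x,
        exp_law_Iic P (E 0) (hEmeas 0) (hElaw 0) x]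
  obtain ⟨hint, hmean⟩ := exp_law_integral P hθ (E 0) (hEmeas 0) (hElaw 0)
  have hSLLN : ∀ᵐ ω ∂P, Tendsto (fun n : ℕ => τ n ω / n) atTop (𝓝 (1/θ)) := by
    have h := strong_law_ae_real E hint hEindep hident
    rw [hmean] at h
    exact h.mono fun ω hω => hω.congr fun n => by rw [hτ]
  -- W basics
  have hWpos : ∀ᵐ ω ∂P, ∀ n, 0 < W n ω := by
    rw [ae_all_iff]
    intro n
    refine ae_iff.2 ?_
    have hc : {ω | ¬ 0 < W n ω} = W n ⁻¹' Set.Iic 0 := by ext ω; simp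
    rw [hc, ← Measure.map_apply (hWmeas n) measurableSet_Iic, hWlaw n]
    exact hμsupp
  have hWsup : ∀ b : ℝ, 0 < μ (Set.Ioi b) → ∀ᵐ ω ∂P, ∃ n, b < W n ω := by
    intro b hb
    have hIic : μ (Set.Iic b) < 1 := by
      have hcompl : Set.Iic b = (Set.Ioi b)ᶜ := by ext x; simp
      rw [hcompl, prob_compl_eq_one_sub measurableSet_Ioi]
      exact ENNReal.sub_lt_self ENNReal.one_ne_top one_ne_zero (ne_of_gt hb)
    have hprod : ∀ N : ℕ, P (⋂ n ∈ Finset.range N, W n ⁻¹' Set.Iic b)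
        = μ (Set.Iic b) ^ N := by
      intro N
      have hmeas : ∀ i ∈ (Finset.range N).map ⟨Sum.inl, Sum.inl_injective⟩,
          MeasurableSet[(Sum.elim (fun n => MeasurableSpace.comap (W n) inferInstance)
            (Sum.elim (fun n => MeasurableSpace.comap (E n) inferInstance)
              (fun n => MeasurableSpace.comap (fun ω s => Y n s ω) inferInstance))) i]
          ((Sum.elim (fun n => W n ⁻¹' Set.Iic b) (fun _ => Set.univ)) i) := by
        intro i hi
        simp only [Finset.mem_map, Function.Embedding.coeFn_mk] at hi
        obtain ⟨n, _, rfl⟩ := hi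
        exact ⟨Set.Iic b, measurableSet_Iic, rfl⟩
      have h := hindep.meas_biInter hmeas
      rw [Finset.prod_map] at h
      have hset : (⋂ i ∈ (Finset.range N).map
            (⟨Sum.inl, Sum.inl_injective⟩ : ℕ ↪ ℕ ⊕ ℕ ⊕ ℕ),
          (Sum.elim (fun n => W n ⁻¹' Set.Iic b)
            (fun (_ : ℕ ⊕ ℕ) => (Set.univ : Set Ω))) i)
          = ⋂ n ∈ Finset.range N, W n ⁻¹' Set.Iic b := by
        ext ω
        simp
      rw [hset] at h
      rw [h]
      have hval : ∀ n : ℕ, P ((Sum.elim (fun n => W n ⁻¹' Set.Iic b) (fun _ => Set.univ))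
          ((⟨Sum.inl, Sum.inl_injective⟩ : ℕ ↪ ℕ ⊕ ℕ ⊕ ℕ) n)) = μ (Set.Iic b) := by
        intro n
        simp only [Function.Embedding.coeFn_mk, Sum.elim_inl]
        rw [← Measure.map_apply (hWmeas n) measurableSet_Iic, hWlaw n]
      rw [Finset.prod_congr rfl fun n _ => hval n, Finset.prod_const, Finset.card_range]
    have h0 : P {ω | ∀ n, W n ω ≤ b} = 0 := by
      have hle : ∀ N : ℕ, P {ω | ∀ n, W n ω ≤ b} ≤ μ (Set.Iic b) ^ N := by
        intro N
        rw [← hprod N]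
        refine measure_mono fun ω hω => ?_
        simp only [Set.mem_iInter]
        intro n _
        exact hω n
      refine le_antisymm ?_ zero_le
      exact ge_of_tendsto' (ENNReal.tendsto_pow_atTop_nhds_zero_of_lt_one hIic) hle
    refine ae_iff.2 ?_
    have hc : {ω | ¬ ∃ n, b < W n ω} = {ω | ∀ n, W n ω ≤ b} := by
      ext ω
      simp [not_exists, not_lt]
    rw [hc]
    exact h0
  -- all Y n t are ≥ 1 for t ≥ 0
  have hY1 : ∀ n (t : ℝ), 0 ≤ t → ∀ ω, 1 ≤ Y n t ω := by
    intro n t ht ω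
    have h := hYmono n ω le_rfl ht
    rwa [hY0 n ω] at h
  -- Yule lower bound event
  have hYlowAll : ∀ᵐ ω ∂P, ∀ n j : ℕ, ∀ᶠ m : ℕ in atTop,
      Real.exp ((1 - 1/((j:ℝ)+1)) * m) ≤ (Y n m ω : ℝ) := by
    rw [ae_all_iff]
    intro n
    rw [ae_all_iff]
    intro j
    set ε : ℝ := 1/((j:ℝ)+1) with hε
    have hε0 : 0 < ε := by positivity
    set s : ℕ → Set Ω := fun m => {ω | Y n m ω < ⌈Real.exp ((1-ε) * m)⌉₊} with hs
    have hsum : ∑' m, P (s m) ≠ ∞ := by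
      refine aux_tsum_ofReal_le P
        (g := fun m => Real.exp (-(ε*m)) + Real.exp (-(m:ℝ))) (fun m => by positivity) ?_ ?_
      · have h1 : Summable (fun m : ℕ => Real.exp (-ε) ^ m) :=
          summable_geometric_of_lt_one (Real.exp_pos _).le
            (Real.exp_lt_one_iff.2 (by linarith))
        have h2 : Summable (fun m : ℕ => Real.exp (-1:ℝ) ^ m) :=
          summable_geometric_of_lt_one (Real.exp_pos _).le
            (Real.exp_lt_one_iff.2 (by norm_num))
        refine Summable.add (h1.congr fun m => ?_) (h2.congr fun m => ?_)
        · rw [← Real.exp_nat_mul]; congr 1; ring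
        · rw [← Real.exp_nat_mul]; congr 1; ring
      · intro m
        have hKb := yule_tail_lt P (fun t ω => Y n t ω) (t := (m:ℝ))
          (fun ω => hY1 n m (Nat.cast_nonneg m) ω) (hYlaw n) (Nat.cast_nonneg m)
          ⌈Real.exp ((1-ε)*m)⌉₊
        refine le_trans hKb ?_
        rw [← ENNReal.ofReal_natCast, ← ENNReal.ofReal_mul (Nat.cast_nonneg _)]
        refine ENNReal.ofReal_le_ofReal ?_
        have hceil : (⌈Real.exp ((1-ε)*m)⌉₊ : ℝ) ≤ Real.exp ((1-ε)*m) + 1 :=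
          (Nat.ceil_lt_add_one (by positivity)).le
        have hsplit : Real.exp ((1-ε)*m) * Real.exp (-(m:ℝ)) = Real.exp (-(ε*m)) := by
          rw [← Real.exp_add]; congr 1; ring
        have e0 : (0:ℝ) < Real.exp (-(m:ℝ)) := Real.exp_pos _
        calc (⌈Real.exp ((1-ε)*m)⌉₊ : ℝ) * Real.exp (-(m:ℝ))
            ≤ (Real.exp ((1-ε)*m) + 1) * Real.exp (-(m:ℝ)) :=
              mul_le_mul_of_nonneg_right hceil e0.le
          _ = Real.exp (-(ε*m)) + Real.exp (-(m:ℝ)) := by rw [add_mul, one_mul, hsplit]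
    filter_upwards [ae_eventually_notMem hsum] with ω hω
    refine hω.mono fun m hm => ?_
    simp only [hs, Set.mem_setOf_eq, not_lt] at hm
    calc Real.exp ((1-ε)*m) ≤ (⌈Real.exp ((1-ε)*m)⌉₊ : ℝ) := Nat.le_ceil _
      _ ≤ (Y n m ω : ℝ) := Nat.cast_le.2 hm
  constructor
  · -- case 1 : essential supremum a
    intro a hIoi hblt _hatom
    have ha : 0 < a := by
      by_contra h
      push_neg at h
      have h1 : μ (Set.Ioi (0:ℝ)) ≤ μ (Set.Ioi a) := measure_mono (Set.Ioi_subset_Ioi h)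
      have h2 : (1 : ℝ≥0∞) = μ Set.univ := measure_univ.symm
      rw [← Set.Iic_union_Ioi (a := (0:ℝ))] at h2
      have h3 := measure_union_le (μ := μ) (Set.Iic (0:ℝ)) (Set.Ioi (0:ℝ))
      rw [← h2, hμsupp] at h3
      simp only [zero_add] at h3
      exact absurd (le_trans h3 (le_trans h1 (le_of_eq hIoi))) (by simp)
    have hWle : ∀ᵐ ω ∂P, ∀ n, W n ω ≤ a := by
      rw [ae_all_iff]
      intro n
      refine ae_iff.2 ?_
      have hc : {ω | ¬ W n ω ≤ a} = W n ⁻¹' Set.Ioi a := by ext ω; simp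
      rw [hc, ← Measure.map_apply (hWmeas n) measurableSet_Ioi, hWlaw n]
      exact hIoi
    have hWsupQ : ∀ᵐ ω ∂P, ∀ q : ℚ, 0 < (q:ℝ) → (q:ℝ) < a → ∃ n, (q:ℝ) < W n ω := by
      rw [ae_all_iff]
      intro q
      by_cases hq1 : 0 < (q:ℝ) ∧ (q:ℝ) < a
      · exact (hWsup q (hblt q hq1.2)).mono fun ω h _ _ => h
      · exact ae_of_all _ fun ω h1 h2 => absurd ⟨h1, h2⟩ hq1
    have hYupAll : ∀ᵐ ω ∂P, ∀ j : ℕ, ∀ᶠ m : ℕ in atTop, ∀ n < (⌈θ⌉₊+1)*(m+1),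
        (Y n (a*m) ω : ℝ) ≤ Real.exp ((a + 1/((j:ℝ)+1))*m) + 1 := by
      rw [ae_all_iff]
      intro j
      set ε : ℝ := 1/((j:ℝ)+1) with hε
      have hε0 : 0 < ε := by positivity
      set D : ℕ := ⌈θ⌉₊ + 1 with hD
      have hD1 : 1 ≤ (D:ℝ) := by
        simp only [hD]
        push_cast
        have h0 : (0:ℝ) ≤ (⌈θ⌉₊ : ℝ) := Nat.cast_nonneg _
        linarith
      set s : ℕ → Set Ω := fun m => ⋃ n ∈ Finset.range (D*(m+1)),
        {ω | ⌊Real.exp ((a+ε)*m)⌋₊ + 1 ≤ Y n (a*m) ω} with hs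
      have hsum : ∑' m, P (s m) ≠ ∞ := by
        refine aux_tsum_ofReal_le P
          (g := fun m => (D:ℝ)*(m+1)*Real.exp (-(ε*m))) (fun m => by positivity) ?_ ?_
        · have h1 : Summable (fun m : ℕ => ((m:ℝ)+1) * Real.exp (-ε) ^ m) :=
            aux_summable_pow (Real.exp_pos _).le (Real.exp_lt_one_iff.2 (by linarith))
          refine ((h1.mul_left (D:ℝ)).congr fun m => ?_)
          rw [← Real.exp_nat_mul]
          have : (m:ℝ) * (-ε) = -(ε*m) := by ring
          rw [this]
          ring
        · intro m
          rcases Nat.eq_zero_or_pos m with hm | hm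
          · subst hm
            refine le_trans prob_le_one ?_
            simp only [Nat.cast_zero, mul_zero, neg_zero, Real.exp_zero, zero_add, mul_one]
            exact ENNReal.one_le_ofReal.2 hD1
          · have hm1 : (1:ℝ) ≤ (m:ℝ) := by exact_mod_cast hm
            have htpos : 0 < a * (m:ℝ) := by positivity
            set K : ℕ := ⌊Real.exp ((a+ε)*m)⌋₊ + 1 with hK
            have hterm : ∀ n ∈ Finset.range (D*(m+1)),
                P {ω | K ≤ Y n (a*m) ω} ≤ ENNReal.ofReal (Real.exp (-(ε*m))) := by
              intro n _
              refine le_trans (yule_tail_ge P (fun t ω => Y n t ω) (hYlaw n) htpos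
                (by omega)) ?_
              refine ENNReal.ofReal_le_ofReal ?_
              set x : ℝ := Real.exp (-(a*m)) with hx
              have hx0 : 0 < x := Real.exp_pos _
              have hx1 : x ≤ 1 := Real.exp_le_one_iff.2 (by nlinarith)
              have hq0 : 0 ≤ 1 - x := by linarith
              have hqe : 1 - x ≤ Real.exp (-x) := by
                have := Real.add_one_le_exp (-x)
                linarith
              have hK1 : K - 1 = ⌊Real.exp ((a+ε)*m)⌋₊ := by omega
              have hfl : Real.exp ((a+ε)*m) - 1 ≤ ((K-1 : ℕ):ℝ) := by
                rw [hK1]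
                exact (Nat.sub_one_lt_floor _).le
              have hsplit : Real.exp ((a+ε)*m) * x = Real.exp (ε*m) := by
                rw [hx, ← Real.exp_add]; congr 1; ring
              have hεm : ε*(m:ℝ) + 1 ≤ Real.exp (ε*m) := Real.add_one_le_exp _
              have hKx : ε*(m:ℝ) ≤ ((K-1:ℕ):ℝ) * x := by nlinarith
              calc (1 - x) ^ (K-1) ≤ Real.exp (-x) ^ (K-1) := by
                    exact pow_le_pow_left₀ hq0 hqe _
                _ = Real.exp (-(((K-1:ℕ):ℝ) * x)) := by
                    rw [← Real.exp_nat_mul]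
                    congr 1
                    ring
                _ ≤ Real.exp (-(ε*m)) := Real.exp_le_exp.2 (by linarith)
            calc P (s m) ≤ ∑ n ∈ Finset.range (D*(m+1)), P {ω | K ≤ Y n (a*m) ω} :=
                  measure_biUnion_finset_le _ _
              _ ≤ ∑ _n ∈ Finset.range (D*(m+1)), ENNReal.ofReal (Real.exp (-(ε*m))) :=
                  Finset.sum_le_sum hterm
              _ = (D*(m+1) : ℕ) * ENNReal.ofReal (Real.exp (-(ε*m))) := by
                  rw [Finset.sum_const, Finset.card_range, nsmul_eq_mul]
              _ ≤ ENNReal.ofReal ((D:ℝ)*(m+1)*Real.exp (-(ε*m))) := by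
                  rw [← ENNReal.ofReal_natCast (D*(m+1)),
                    ← ENNReal.ofReal_mul (Nat.cast_nonneg _)]
                  refine ENNReal.ofReal_le_ofReal ?_
                  push_cast
                  rw [mul_assoc]
      filter_upwards [ae_eventually_notMem hsum] with ω hω
      refine hω.mono fun m hm => ?_
      intro n hn
      have hnot : ω ∉ {ω | ⌊Real.exp ((a+ε)*m)⌋₊ + 1 ≤ Y n (a*m) ω} := by
        intro hmem
        exact hm (Set.mem_biUnion (Finset.mem_range.2 hn) hmem)
      simp only [Set.mem_setOf_eq, not_le] at hnot
      have h1 : Y n (a*m) ω ≤ ⌊Real.exp ((a+ε)*m)⌋₊ := by omega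
      calc (Y n (a*m) ω : ℝ) ≤ (⌊Real.exp ((a+ε)*m)⌋₊ : ℝ) := Nat.cast_le.2 h1
        _ ≤ Real.exp ((a+ε)*m) := Nat.floor_le (by positivity)
        _ ≤ Real.exp ((a+ε)*m) + 1 := by linarith
    filter_upwards [hSLLN, hEpos, hWpos, hWle, hYlowAll, hYupAll, hWsupQ] with ω
      h1 h2 h3 h4 h5 h6 h7
    have hτ0ω : τ 0 ω = 0 := by rw [hτ]; simp
    have hτmonoω : StrictMono (fun n => τ n ω) := by
      refine strictMono_nat_of_lt_succ fun n => ?_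
      rw [hτ, hτ, Finset.sum_range_succ]
      have := h2 n
      linarith
    exact omega_case1 hθ ha (fun n => W n ω) (fun n => τ n ω) (fun n t => Y n t ω)
      (fun n t => Z n t ω) (fun t => Mt t ω) (fun t => Nt t ω)
      (fun n => hY0 n ω) (fun n s t hs hst => hYmono n ω hs hst)
      (fun n t => hZ n t ω) (fun t => hM t ω) (fun t => hN t ω)
      hτ0ω hτmonoω h1 h3 h4 h5 h6 h7
  · -- case 2 : essential supremum infinite
    intro hball
    have hWsupN : ∀ᵐ ω ∂P, ∀ k : ℕ, ∃ n, (k:ℝ) < W n ω :=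
      ae_all_iff.2 fun k => hWsup k (hball k)
    filter_upwards [hSLLN, hEpos, hWpos, hYlowAll, hWsupN] with ω h1 h2 h3 h5 h7
    have hτ0ω : τ 0 ω = 0 := by rw [hτ]; simp
    have hτmonoω : StrictMono (fun n => τ n ω) := by
      refine strictMono_nat_of_lt_succ fun n => ?_
      rw [hτ, hτ, Finset.sum_range_succ]
      have := h2 n
      linarith
    exact omega_case2 hθ (fun n => W n ω) (fun n => τ n ω) (fun n t => Y n t ω)
      (fun n t => Z n t ω) (fun t => Mt t ω) (fun t => Nt t ω)
      (fun n => hY0 n ω) (fun n s t hs hst => hYmono n ω hs hst)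
      (fun n t => hZ n t ω) (fun t => hM t ω) (fun t => hN t ω)
      hτ0ω hτmonoω h1 h3 h5 h7
end

section
/- In the continuous-time disordered Chinese restaurant process with weight distribution μ having no atom at its essential supremum, for every fixed table index i, Z_i(t) → ∞ and Z_i(t)/N(t) → 0 almost surely as t→∞, where N(t) is the total number of customers. In particular no fixed table has macroscopic occupancy. -/
set_option linter.unusedSectionVars false

open MeasureTheory ProbabilityTheory Filter
open scoped ENNReal

open MeasureTheory ProbabilityTheory Filter


section aux
variable {Ω : Type*} [MeasurableSpace Ω] (P : Measure Ω)
  (Y : ℕ → ℝ → Ω → ℕ)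
  (hY0 : ∀ n ω, Y n 0 ω = 1)
  (hYmono : ∀ n ω ⦃s t : ℝ⦄, 0 ≤ s → s ≤ t → Y n s ω ≤ Y n t ω)
  (hYlaw : ∀ n, ∀ t : ℝ, 0 ≤ t → ∀ k : ℕ, 1 ≤ k →
      P {ω | Y n t ω = k} =
        ENNReal.ofReal (Real.exp (-t) * (1 - Real.exp (-t)) ^ (k - 1)))

include hYlaw in
lemma aux_tailY (n : ℕ) {t : ℝ} (ht : 0 < t) (M : ℕ) :
    P {ω | M < Y n t ω} ≤ ENNReal.ofReal ((1 - Real.exp (-t)) ^ M) := by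
  set x : ℝ := 1 - Real.exp (-t) with hx
  have hxpos : 0 ≤ x := by
    have := Real.exp_le_one_iff.2 (by linarith : -t ≤ 0)
    simp [hx]; linarith
  have hxlt : x < 1 := by
    have := Real.exp_pos (-t); simp [hx]; linarith
  have hsub : {ω | M < Y n t ω} ⊆ ⋃ k : ℕ, {ω | Y n t ω = M + 1 + k} := by
    intro ω hω
    simp only [Set.mem_setOf_eq] at hω
    exact Set.mem_iUnion.2 ⟨Y n t ω - (M + 1), by simp only [Set.mem_setOf_eq]; omega⟩
  refine le_trans (le_trans (measure_mono hsub) (measure_iUnion_le _)) ?_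
  have hterm : ∀ k : ℕ, P {ω | Y n t ω = M + 1 + k} =
      ENNReal.ofReal (Real.exp (-t) * x ^ (M + k)) := by
    intro k
    rw [hYlaw n t ht.le (M + 1 + k) (by omega)]
    have : M + 1 + k - 1 = M + k := by omega
    rw [this]
  simp_rw [hterm]
  rw [← ENNReal.ofReal_tsum_of_nonneg]
  · apply ENNReal.ofReal_le_ofReal
    have : ∀ k : ℕ, Real.exp (-t) * x ^ (M + k) = (Real.exp (-t) * x ^ M) * x ^ k := by
      intro k; rw [pow_add]; ring
    simp_rw [this]
    rw [tsum_mul_left, tsum_geometric_of_lt_one hxpos hxlt]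
    have h1x : 1 - x = Real.exp (-t) := by simp [hx]
    rw [h1x, mul_comm (Real.exp (-t)) (x ^ M), mul_assoc,
      mul_inv_cancel₀ (Real.exp_pos (-t)).ne', mul_one]
  · intro k
    positivity
  · apply Summable.mul_left
    have : (fun k : ℕ => x ^ (M + k)) = fun k : ℕ => x ^ M * x ^ k := by
      funext k; rw [pow_add]
    rw [this]
    exact (summable_geometric_of_lt_one hxpos hxlt).mul_left _

include hY0 hYmono hYlaw in
lemma aux_lowY (n : ℕ) {t : ℝ} (ht : 0 ≤ t) (K : ℕ) :
    P {ω | Y n t ω < K} ≤ (K : ℝ≥0∞) * ENNReal.ofReal (Real.exp (-t)) := by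
  have hge1 : ∀ ω, 1 ≤ Y n t ω := fun ω => by
    have := hYmono n ω le_rfl ht; rw [hY0 n ω] at this; exact this
  have hxpos : 0 ≤ 1 - Real.exp (-t) := by
    have := Real.exp_le_one_iff.2 (by linarith : -t ≤ 0); linarith
  have hxlt : 1 - Real.exp (-t) ≤ 1 := by
    have := Real.exp_pos (-t); linarith
  have hsub : {ω | Y n t ω < K} ⊆ ⋃ k ∈ Finset.Ico 1 K, {ω | Y n t ω = k} := by
    intro ω hω
    simp only [Set.mem_iUnion, Set.mem_setOf_eq]
    exact ⟨Y n t ω, by simp only [Finset.mem_Ico]; exact ⟨hge1 ω, hω⟩, rfl⟩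
  refine le_trans (le_trans (measure_mono hsub) (measure_biUnion_finset_le _ _)) ?_
  have hterm : ∀ k ∈ Finset.Ico 1 K, P {ω | Y n t ω = k} ≤ ENNReal.ofReal (Real.exp (-t)) := by
    intro k hk
    rw [Finset.mem_Ico] at hk
    rw [hYlaw n t ht k hk.1]
    apply ENNReal.ofReal_le_ofReal
    calc Real.exp (-t) * (1 - Real.exp (-t)) ^ (k - 1)
        ≤ Real.exp (-t) * 1 := by
          apply mul_le_mul_of_nonneg_left _ (Real.exp_pos (-t)).le
          exact pow_le_one₀ hxpos hxlt
      _ = Real.exp (-t) := mul_one _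
  calc ∑ k ∈ Finset.Ico 1 K, P {ω | Y n t ω = k}
      ≤ ∑ _k ∈ Finset.Ico 1 K, ENNReal.ofReal (Real.exp (-t)) := Finset.sum_le_sum hterm
    _ = (Finset.Ico 1 K).card * ENNReal.ofReal (Real.exp (-t)) := by
        rw [Finset.sum_const, nsmul_eq_mul]
    _ ≤ (K : ℝ≥0∞) * ENNReal.ofReal (Real.exp (-t)) := by
        apply mul_le_mul_left
        simp only [Nat.card_Ico]
        exact_mod_cast Nat.sub_le K 1

end aux

section aux2
variable {Ω : Type*} [MeasurableSpace Ω] (P : Measure Ω) [IsProbabilityMeasure P]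
  (Y : ℕ → ℝ → Ω → ℕ)
  (hY0 : ∀ n ω, Y n 0 ω = 1)
  (hYmono : ∀ n ω ⦃s t : ℝ⦄, 0 ≤ s → s ≤ t → Y n s ω ≤ Y n t ω)
  (hYlaw : ∀ n, ∀ t : ℝ, 0 ≤ t → ∀ k : ℕ, 1 ≤ k →
      P {ω | Y n t ω = k} =
        ENNReal.ofReal (Real.exp (-t) * (1 - Real.exp (-t)) ^ (k - 1)))

include hY0 hYmono hYlaw in
lemma aux_goodY_nk (n : ℕ) {ε : ℝ} (hε : 0 < ε) (hε1 : ε ≤ 1) :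
    ∀ᵐ ω ∂P, ∀ᶠ m : ℕ in atTop,
      Real.exp ((1 - ε) * (m + 1)) ≤ (Y n m ω : ℝ) ∧
      (Y n m ω : ℝ) ≤ Real.exp ((1 + ε) * m) := by
  set p : ℕ → Ω → Prop := fun m ω =>
    (Y n m ω : ℝ) < Real.exp ((1 - ε) * (m + 1)) ∨
    Real.exp ((1 + ε) * m) < (Y n m ω : ℝ) with hp
  have hboundA : ∀ m : ℕ, P {ω | (Y n m ω : ℝ) < Real.exp ((1 - ε) * (m + 1))} ≤
      ENNReal.ofReal ((Real.exp 1 + 1) * Real.exp (-(ε * m))) := by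
    intro m
    set K : ℕ := ⌈Real.exp ((1 - ε) * (m + 1))⌉₊ with hK
    have hsub : {ω | (Y n m ω : ℝ) < Real.exp ((1 - ε) * (m + 1))} ⊆ {ω | Y n m ω < K} :=
      fun ω hω => Nat.lt_ceil.2 hω
    refine le_trans (measure_mono hsub) (le_trans (aux_lowY P Y hY0 hYmono hYlaw n (by positivity) K) ?_)
    rw [← ENNReal.ofReal_natCast, ← ENNReal.ofReal_mul (by positivity)]
    apply ENNReal.ofReal_le_ofReal
    have hKle : (K : ℝ) ≤ Real.exp ((1 - ε) * (m + 1)) + 1 :=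
      (Nat.ceil_lt_add_one (Real.exp_nonneg _)).le
    have hexp : Real.exp ((1 - ε) * (m + 1)) * Real.exp (-(m : ℝ)) =
        Real.exp ((1 - ε) * (m + 1) - m) := by rw [← Real.exp_add]; ring_nf
    calc (K : ℝ) * Real.exp (-(m : ℝ))
        ≤ (Real.exp ((1 - ε) * (m + 1)) + 1) * Real.exp (-(m : ℝ)) := by
          apply mul_le_mul_of_nonneg_right hKle (Real.exp_nonneg _)
      _ = Real.exp ((1 - ε) * (m + 1) - m) + Real.exp (-(m : ℝ)) := by
          rw [add_mul, one_mul, hexp]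
      _ ≤ Real.exp 1 * Real.exp (-(ε * m)) + Real.exp (-(ε * m)) := by
          have hmn : (0:ℝ) ≤ (m:ℝ) := Nat.cast_nonneg m
          have h1 : Real.exp ((1 - ε) * (m + 1) - m) ≤ Real.exp 1 * Real.exp (-(ε*m)) := by
            rw [← Real.exp_add]
            apply Real.exp_le_exp.2
            nlinarith
          have h2 : Real.exp (-(m:ℝ)) ≤ Real.exp (-(ε*m)) := by
            apply Real.exp_le_exp.2
            nlinarith
          linarith
      _ = (Real.exp 1 + 1) * Real.exp (-(ε * m)) := by ring
  have hboundB : ∀ m : ℕ, P {ω | Real.exp ((1 + ε) * m) < (Y n m ω : ℝ)} ≤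
      ENNReal.ofReal (Real.exp (-(ε * m))) := by
    intro m
    rcases Nat.eq_zero_or_pos m with hm | hm
    · subst hm
      simp only [Nat.cast_zero, mul_zero, neg_zero, Real.exp_zero, ENNReal.ofReal_one]
      exact prob_le_one
    · have hmpos : (0 : ℝ) < m := by exact_mod_cast hm
      set M : ℕ := ⌊Real.exp ((1 + ε) * m)⌋₊ with hM
      have hsub : {ω | Real.exp ((1 + ε) * m) < (Y n m ω : ℝ)} ⊆ {ω | M < Y n m ω} := by
        intro ω hω
        have h1 : (M : ℝ) ≤ Real.exp ((1 + ε) * m) := Nat.floor_le (Real.exp_nonneg _)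
        exact_mod_cast lt_of_le_of_lt h1 hω
      refine le_trans (measure_mono hsub) (le_trans (aux_tailY P Y hYlaw n hmpos M) ?_)
      apply ENNReal.ofReal_le_ofReal
      have h0 : (0:ℝ) ≤ 1 - Real.exp (-(m:ℝ)) := by
        have := Real.exp_le_one_iff.2 (by linarith : -(m:ℝ) ≤ 0); linarith
      have h1 : 1 - Real.exp (-(m:ℝ)) ≤ Real.exp (-Real.exp (-(m:ℝ))) := by
        have := Real.add_one_le_exp (-Real.exp (-(m:ℝ))); linarith
      calc (1 - Real.exp (-(m:ℝ))) ^ M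
          ≤ Real.exp (-Real.exp (-(m:ℝ))) ^ M := pow_le_pow_left₀ h0 h1 M
        _ = Real.exp (-(M * Real.exp (-(m:ℝ)))) := by
            rw [← Real.exp_nat_mul]; ring_nf
        _ ≤ Real.exp (-(ε * m)) := by
            apply Real.exp_le_exp.2
            have hMge : Real.exp ((1 + ε) * m) - 1 < (M : ℝ) := Nat.sub_one_lt_floor _
            have hem : Real.exp (-(m:ℝ)) ≤ 1 := Real.exp_le_one_iff.2 (by linarith)
            have hprod : Real.exp ((1+ε)*m) * Real.exp (-(m:ℝ)) = Real.exp (ε * m) := by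
              rw [← Real.exp_add]; ring_nf
            have hεm : ε * m + 1 ≤ Real.exp (ε * m) := Real.add_one_le_exp _
            have hexppos : 0 < Real.exp (-(m:ℝ)) := Real.exp_pos _
            nlinarith
  have hsum : (∑' m : ℕ, P {ω | p m ω}) ≠ ∞ := by
    have hU : ∀ m : ℕ, P {ω | p m ω} ≤
        ENNReal.ofReal ((Real.exp 1 + 2) * Real.exp (-(ε * m))) := by
      intro m
      have : {ω | p m ω} ⊆ {ω | (Y n m ω : ℝ) < Real.exp ((1 - ε) * (m + 1))} ∪
          {ω | Real.exp ((1 + ε) * m) < (Y n m ω : ℝ)} := fun ω hω => hω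
      refine le_trans (measure_mono this) (le_trans (measure_union_le _ _) ?_)
      refine le_trans (add_le_add (hboundA m) (hboundB m)) ?_
      rw [← ENNReal.ofReal_add (by positivity) (by positivity)]
      apply ENNReal.ofReal_le_ofReal
      ring_nf
      nlinarith [Real.exp_nonneg (-(ε * m))]
    refine ne_top_of_le_ne_top ?_ (ENNReal.tsum_le_tsum hU)
    have heq : ∀ m : ℕ, (Real.exp 1 + 2) * Real.exp (-(ε * m)) =
        (Real.exp 1 + 2) * Real.exp (-ε) ^ m := by
      intro m
      rw [← Real.exp_nat_mul]
      ring_nf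
    simp_rw [heq]
    rw [← ENNReal.ofReal_tsum_of_nonneg (fun m => by positivity)
      ((summable_geometric_of_lt_one (Real.exp_nonneg _)
        (Real.exp_lt_one_iff.2 (by linarith))).mul_left _)]
    exact ENNReal.ofReal_ne_top
  have hz : P {ω | ∃ᶠ m : ℕ in atTop, p m ω} = 0 :=
    measure_setOf_frequently_eq_zero hsum
  have hae : ∀ᵐ ω ∂P, ∀ᶠ m : ℕ in atTop, ¬ p m ω := by
    have hset : {ω | ¬ ∀ᶠ m : ℕ in atTop, ¬ p m ω} = {ω | ∃ᶠ m : ℕ in atTop, p m ω} := by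
      ext ω; rw [Set.mem_setOf_eq, Set.mem_setOf_eq, Filter.not_eventually]
      simp only [not_not]
    rw [ae_iff, hset]
    exact hz
  filter_upwards [hae] with ω hω
  filter_upwards [hω] with m hm
  simp only [hp] at hm
  push_neg at hm
  exact hm
end aux2

lemma aux_path {Ω : Type*} (Y : ℕ → ℝ → Ω → ℕ)
    (hYmono : ∀ n ω ⦃s t : ℝ⦄, 0 ≤ s → s ≤ t → Y n s ω ≤ Y n t ω)
    (n : ℕ) (ω : Ω) {ε : ℝ} (hε : 0 < ε) (hε1 : ε ≤ 1)
    (h : ∀ᶠ m : ℕ in atTop, Real.exp ((1 - ε) * (m + 1)) ≤ (Y n m ω : ℝ) ∧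
      (Y n m ω : ℝ) ≤ Real.exp ((1 + ε) * m)) :
    ∀ᶠ s : ℝ in atTop, Real.exp ((1 - ε) * s) ≤ (Y n s ω : ℝ) ∧
      (Y n s ω : ℝ) ≤ Real.exp ((1 + ε) * (s + 1)) := by
  obtain ⟨N, hN⟩ := eventually_atTop.1 h
  filter_upwards [eventually_ge_atTop ((N : ℝ))] with s hs
  have hs0 : (0 : ℝ) ≤ s := le_trans (Nat.cast_nonneg N) hs
  set m : ℕ := ⌊s⌋₊ with hm
  have hmN : N ≤ m := Nat.le_floor hs
  have hm1 : (m : ℝ) ≤ s := Nat.floor_le hs0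
  have hm2 : s < (m : ℝ) + 1 := Nat.lt_floor_add_one s
  have hlow := (hN m hmN).1
  have hup := (hN (m + 1) (by omega)).2
  have hcast : ((m + 1 : ℕ) : ℝ) = (m : ℝ) + 1 := by push_cast; ring
  constructor
  · have hY : (Y n m ω : ℝ) ≤ (Y n s ω : ℝ) := by
      exact_mod_cast hYmono n ω (Nat.cast_nonneg m) hm1
    refine le_trans ?_ (le_trans hlow hY)
    apply Real.exp_le_exp.2
    nlinarith
  · have hY : (Y n s ω : ℝ) ≤ (Y n ((m + 1 : ℕ) : ℝ) ω : ℝ) := by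
      exact_mod_cast hYmono n ω hs0 (by rw [hcast]; linarith)
    refine le_trans hY (le_trans hup ?_)
    rw [hcast]
    apply Real.exp_le_exp.2
    nlinarith

section aux4
variable {Ω : Type*} [MeasurableSpace Ω] (P : Measure Ω) [IsProbabilityMeasure P]
    (μ : Measure ℝ) [IsProbabilityMeasure μ]
    (hnoatom : ∀ a : ℝ, μ (Set.Ioi a) = 0 → μ {a} = 0)
    (W : ℕ → Ω → ℝ) (hWmeas : ∀ n, Measurable (W n))
    (hWlaw : ∀ n, Measure.map (W n) P = μ)
    (E : ℕ → Ω → ℝ) (Y : ℕ → ℝ → Ω → ℕ)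
    (hindep : iIndep (fun i : ℕ ⊕ ℕ ⊕ ℕ =>
      Sum.elim (fun n => MeasurableSpace.comap (W n) inferInstance)
        (Sum.elim (fun n => MeasurableSpace.comap (E n) inferInstance)
          (fun n => MeasurableSpace.comap (fun ω s => Y n s ω) inferInstance)) i) P)

include hWmeas hWlaw hindep in
lemma aux_W_prod (r : ℝ) (i m : ℕ) :
    P {ω | ∀ j, j ≠ i → W j ω ≤ r} ≤ μ (Set.Iic r) ^ m := by
  classical
  set Jm : Finset ℕ := Finset.image (fun l => l + i + 1) (Finset.range m) with hJm
  have hinj : ∀ x ∈ Finset.range m, ∀ y ∈ Finset.range m,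
      x + i + 1 = y + i + 1 → x = y := fun x _ y _ h => by omega
  set f : (ℕ ⊕ ℕ ⊕ ℕ) → Set Ω := fun x =>
    Sum.elim (fun j => W j ⁻¹' Set.Iic r) (fun _ => Set.univ) x with hf
  have hsub : {ω | ∀ j, j ≠ i → W j ω ≤ r} ⊆ ⋂ x ∈ Jm.image Sum.inl, f x := by
    intro ω hω
    simp only [Set.mem_iInter]
    intro x hx
    simp only [Finset.mem_image, hJm] at hx
    obtain ⟨j, ⟨l, _, rfl⟩, rfl⟩ := hx
    exact hω _ (by omega)
  refine le_trans (measure_mono hsub) ?_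
  have hmeas : ∀ x ∈ Jm.image Sum.inl,
      MeasurableSet[(fun i : ℕ ⊕ ℕ ⊕ ℕ =>
        Sum.elim (fun n => MeasurableSpace.comap (W n) inferInstance)
          (Sum.elim (fun n => MeasurableSpace.comap (E n) inferInstance)
            (fun n => MeasurableSpace.comap (fun ω s => Y n s ω) inferInstance)) i) x] (f x) := by
    intro x hx
    simp only [Finset.mem_image] at hx
    obtain ⟨j, _, rfl⟩ := hx
    exact ⟨Set.Iic r, measurableSet_Iic, rfl⟩
  rw [hindep.meas_biInter hmeas]
  rw [Finset.prod_image (fun x _ y _ h => Sum.inl.inj h)]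
  have hval : ∀ j : ℕ, P (f (Sum.inl j)) = μ (Set.Iic r) := by
    intro j
    have : f (Sum.inl j) = W j ⁻¹' Set.Iic r := rfl
    rw [this, ← hWlaw j, Measure.map_apply (hWmeas j) measurableSet_Iic]
  calc ∏ j ∈ Jm, P (f (Sum.inl j)) = ∏ _j ∈ Jm, μ (Set.Iic r) := by
        apply Finset.prod_congr rfl; intro j _; exact hval j
    _ = μ (Set.Iic r) ^ Jm.card := by rw [Finset.prod_const]
    _ = μ (Set.Iic r) ^ m := by rw [hJm, Finset.card_image_of_injOn hinj, Finset.card_range]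
    _ ≤ μ (Set.Iic r) ^ m := le_rfl

include hnoatom hWmeas hWlaw hindep in
lemma aux_W (i : ℕ) : P {ω | ∀ j, j ≠ i → W j ω ≤ W i ω} = 0 := by
  classical
  set T : Set ℝ := {x | μ (Set.Ioi x) = 0} with hT
  have hTup : ∀ z ∈ T, ∀ x, z ≤ x → x ∈ T := by
    intro z hz x hzx
    simp only [hT, Set.mem_setOf_eq] at hz ⊢
    exact le_antisymm (le_trans (measure_mono (Set.Ioi_subset_Ioi hzx)) hz.le) zero_le
  -- a null measurable superset of T
  have key : ∃ S : Set ℝ, T ⊆ S ∧ MeasurableSet S ∧ μ S = 0 ∧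
      ∀ x ∉ S, ∃ r : ℚ, x < (r:ℝ) ∧ μ (Set.Ioi (r:ℝ)) ≠ 0 := by
    rcases Set.eq_empty_or_nonempty T with hTe | hTne
    · refine ⟨∅, by rw [hTe], MeasurableSet.empty, measure_empty, fun x _ => ?_⟩
      obtain ⟨r, hr⟩ := exists_rat_gt x
      refine ⟨r, hr, fun h0 => ?_⟩
      have : (r:ℝ) ∈ T := h0
      rw [hTe] at this; exact this
    · have hbdd : BddBelow T := by
        by_contra hb
        have hall : ∀ n : ℕ, μ (Set.Ioi (-(n : ℝ))) = 0 := by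
          intro n
          rw [not_bddBelow_iff] at hb
          obtain ⟨z, hz, hzn⟩ := hb (-(n : ℝ))
          exact (hTup z hz _ hzn.le)
        have huniv : (Set.univ : Set ℝ) ⊆ ⋃ n : ℕ, Set.Ioi (-(n : ℝ)) := by
          intro x _
          obtain ⟨n, hn⟩ := exists_nat_gt (-x)
          exact Set.mem_iUnion.2 ⟨n, by simp only [Set.mem_Ioi]; linarith⟩
        have : μ Set.univ = 0 := by
          refine le_antisymm (le_trans (measure_mono huniv) ?_) zero_le
          refine le_trans (measure_iUnion_le _) ?_
          simp [hall]
        simp [measure_univ] at this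
      set q : ℝ := sInf T with hq
      have hqmem : ∀ n : ℕ, q + 1 / (n + 1) ∈ T := by
        intro n
        have : sInf T < q + 1 / (n + 1) := by
          rw [← hq]; have : (0:ℝ) < 1 / ((n:ℝ) + 1) := by positivity
          linarith
        obtain ⟨z, hz, hzlt⟩ := exists_lt_of_csInf_lt hTne this
        exact hTup z hz _ hzlt.le
      have hIoi : μ (Set.Ioi q) = 0 := by
        have hcover : Set.Ioi q ⊆ ⋃ n : ℕ, Set.Ioi (q + 1 / (n + 1)) := by
          intro x hx
          simp only [Set.mem_Ioi] at hx
          obtain ⟨n, hn⟩ := exists_nat_one_div_lt (by linarith : (0:ℝ) < x - q)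
          exact Set.mem_iUnion.2 ⟨n, by simp only [Set.mem_Ioi]; linarith⟩
        refine le_antisymm (le_trans (measure_mono hcover) ?_) zero_le
        refine le_trans (measure_iUnion_le _) (le_of_eq (ENNReal.tsum_eq_zero.2 fun n => ?_))
        have hh := hqmem n
        simp only [hT, Set.mem_setOf_eq] at hh
        simpa [one_div] using hh
      have hsingle : μ {q} = 0 := hnoatom q hIoi
      refine ⟨Set.Ici q, ?_, measurableSet_Ici, ?_, ?_⟩
      · intro x hx
        exact csInf_le hbdd hx
      · rw [← Set.Ioi_insert, Set.insert_eq]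
        refine le_antisymm (le_trans (measure_union_le _ _) ?_) zero_le
        rw [hsingle, hIoi, add_zero]
      · intro x hx
        rw [Set.mem_Ici, not_le] at hx
        obtain ⟨r, hr1, hr2⟩ := exists_rat_btwn hx
        refine ⟨r, hr1, fun h0 => ?_⟩
        have : q ≤ (r:ℝ) := csInf_le hbdd h0
        linarith
  obtain ⟨S, hTS, hSmeas, hS0, hSout⟩ := key
  set A : Set Ω := {ω | ∀ j, j ≠ i → W j ω ≤ W i ω} with hA
  set D : ℚ → Set Ω := fun r => {ω | μ (Set.Ioi (r : ℝ)) ≠ 0 ∧ ∀ j, j ≠ i → W j ω ≤ (r:ℝ)}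
    with hD
  have hcover : A ⊆ (W i ⁻¹' S) ∪ ⋃ r : ℚ, D r := by
    intro ω hω
    by_cases hWi : W i ω ∈ S
    · exact Or.inl hWi
    · right
      obtain ⟨r, hr1, hr2⟩ := hSout _ hWi
      exact Set.mem_iUnion.2 ⟨r, hr2, fun j hj => le_trans (hω j hj) hr1.le⟩
  have hDnull : ∀ r : ℚ, P (D r) = 0 := by
    intro r
    by_cases h0 : μ (Set.Ioi (r:ℝ)) = 0
    · have : D r = ∅ := by
        ext ω; simp only [hD, Set.mem_setOf_eq, Set.mem_empty_iff_false, iff_false, not_and]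
        intro h; exact absurd h0 h
      rw [this, measure_empty]
    · have hlt : μ (Set.Iic (r:ℝ)) < 1 := by
        have hcompl : Set.Iic (r:ℝ) = (Set.Ioi (r:ℝ))ᶜ := by
          simp [Set.compl_Ioi]
        rw [hcompl, prob_compl_eq_one_sub measurableSet_Ioi]
        exact ENNReal.sub_lt_self ENNReal.one_ne_top one_ne_zero h0
      have hbound : ∀ m : ℕ, P (D r) ≤ μ (Set.Iic (r:ℝ)) ^ m := by
        intro m
        refine le_trans (measure_mono ?_) (aux_W_prod P μ W hWmeas hWlaw E Y hindep (r:ℝ) i m)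
        intro ω hω
        exact hω.2
      have htend := ENNReal.tendsto_pow_atTop_nhds_zero_of_lt_one hlt
      have := ge_of_tendsto' htend hbound
      exact le_antisymm this zero_le
  refine le_antisymm (le_trans (measure_mono hcover) ?_) zero_le
  refine le_trans (measure_union_le _ _) ?_
  have h1 : P (W i ⁻¹' S) = 0 := by
    rw [← hWlaw i, Measure.map_apply (hWmeas i) hSmeas] at hS0
    exact hS0
  have h2 : P (⋃ r : ℚ, D r) = 0 := by
    refine le_antisymm (le_trans (measure_iUnion_le _) ?_) zero_le
    simp [hDnull]
  rw [h1, h2, add_zero]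
end aux4

section aux5
variable {Ω : Type*} [MeasurableSpace Ω] (P : Measure Ω) [IsProbabilityMeasure P]
    (θ : ℝ) (hθ : 0 < θ)
    (W : ℕ → Ω → ℝ)
    (E : ℕ → Ω → ℝ) (hEmeas : ∀ n, Measurable (E n))
    (hElaw : ∀ n, ∀ x : ℝ, 0 ≤ x → P {ω | x < E n ω} = ENNReal.ofReal (Real.exp (-θ * x)))
    (τ : ℕ → Ω → ℝ) (hτ : ∀ n ω, τ n ω = ∑ i ∈ Finset.range n, E i ω)
    (Y : ℕ → ℝ → Ω → ℕ)
    (hindep : iIndep (fun i : ℕ ⊕ ℕ ⊕ ℕ =>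
      Sum.elim (fun n => MeasurableSpace.comap (W n) inferInstance)
        (Sum.elim (fun n => MeasurableSpace.comap (E n) inferInstance)
          (fun n => MeasurableSpace.comap (fun ω s => Y n s ω) inferInstance)) i) P)

include hθ hEmeas hElaw in
lemma aux_Eiic (l : ℕ) {t : ℝ} (ht : 0 ≤ t) :
    P {ω | E l ω ≤ t} = 1 - ENNReal.ofReal (Real.exp (-θ * t)) := by
  have hset : {ω | E l ω ≤ t} = {ω | t < E l ω}ᶜ := by
    ext ω; simp [not_lt]
  have hmeas : MeasurableSet {ω | t < E l ω} := by
    have : {ω | t < E l ω} = E l ⁻¹' Set.Ioi t := rfl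
    rw [this]; exact (hEmeas l) measurableSet_Ioi
  rw [hset, prob_compl_eq_one_sub hmeas, hElaw l t ht]

include hθ hEmeas hElaw hτ hindep in
lemma aux_tau {t : ℝ} (ht : 0 ≤ t) :
    P ({ω | ∀ n, 0 < E n ω} ∩ {ω | ∀ n, τ n ω ≤ t}) = 0 := by
  classical
  set c : ℝ≥0∞ := 1 - ENNReal.ofReal (Real.exp (-θ * t)) with hc
  have hclt : c < 1 := by
    rw [hc]
    exact ENNReal.sub_lt_self ENNReal.one_ne_top one_ne_zero
      (ENNReal.ofReal_pos.2 (Real.exp_pos _)).ne'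
  have hbound : ∀ m : ℕ, P ({ω | ∀ n, 0 < E n ω} ∩ {ω | ∀ n, τ n ω ≤ t}) ≤ c ^ m := by
    intro m
    set f : (ℕ ⊕ ℕ ⊕ ℕ) → Set Ω := fun x =>
      Sum.elim (fun _ => Set.univ) (Sum.elim (fun l => E l ⁻¹' Set.Iic t) (fun _ => Set.univ)) x
      with hf
    set S : Finset (ℕ ⊕ ℕ ⊕ ℕ) := (Finset.range m).image (fun l => Sum.inr (Sum.inl l)) with hS
    have hsub : {ω | ∀ n, 0 < E n ω} ∩ {ω | ∀ n, τ n ω ≤ t} ⊆ ⋂ x ∈ S, f x := by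
      intro ω hω
      obtain ⟨hpos, hτle⟩ := hω
      simp only [Set.mem_iInter]
      intro x hx
      simp only [hS, Finset.mem_image] at hx
      obtain ⟨l, _, rfl⟩ := hx
      have h1 : E l ω ≤ τ (l + 1) ω := by
        rw [hτ (l + 1) ω]
        refine Finset.single_le_sum (fun k _ => (hpos k).le) ?_
        simp
      exact le_trans h1 (hτle (l + 1))
    refine le_trans (measure_mono hsub) ?_
    have hmeas : ∀ x ∈ S,
        MeasurableSet[(fun i : ℕ ⊕ ℕ ⊕ ℕ =>
          Sum.elim (fun n => MeasurableSpace.comap (W n) inferInstance)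
            (Sum.elim (fun n => MeasurableSpace.comap (E n) inferInstance)
              (fun n => MeasurableSpace.comap (fun ω s => Y n s ω) inferInstance)) i) x] (f x) := by
      intro x hx
      simp only [hS, Finset.mem_image] at hx
      obtain ⟨l, _, rfl⟩ := hx
      exact ⟨Set.Iic t, measurableSet_Iic, rfl⟩
    rw [hindep.meas_biInter hmeas, hS]
    rw [Finset.prod_image (fun x _ y _ h => by simpa using h)]
    have hval : ∀ l : ℕ, P (f (Sum.inr (Sum.inl l))) = c := by
      intro l
      have : f (Sum.inr (Sum.inl l)) = {ω | E l ω ≤ t} := rfl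
      rw [this, aux_Eiic P θ hθ E hEmeas hElaw l ht, hc]
    calc ∏ l ∈ Finset.range m, P (f (Sum.inr (Sum.inl l)))
        = ∏ _l ∈ Finset.range m, c := Finset.prod_congr rfl (fun l _ => hval l)
      _ = c ^ m := by rw [Finset.prod_const, Finset.card_range]
      _ ≤ c ^ m := le_rfl
  have htend := ENNReal.tendsto_pow_atTop_nhds_zero_of_lt_one hclt
  exact le_antisymm (ge_of_tendsto' htend hbound) zero_le
end aux5

/-- In the continuous-time disordered Chinese restaurant process (tables created at the
partial sums `τ_n` of i.i.d. rate-`θ` exponentials, weights `W_n` i.i.d. with law `μ`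
having no atom at its essential supremum, sizes `Z_n(t) = Y_n(W_n (t - τ_n)) 1_{t ≥ τ_n}`
for i.i.d. rate-1 Yule processes, all jointly independent), for every fixed table `i`,
almost surely `Z_i(t) → ∞` and `Z_i(t)/N(t) → 0` as `t → ∞`, where `N(t)` is the total
number of customers. -/
theorem crp_fixed_table_microscopic
    {Ω : Type*} [MeasurableSpace Ω] (P : Measure Ω) [IsProbabilityMeasure P]
    (θ : ℝ) (hθ : 0 < θ)
    (μ : Measure ℝ) [IsProbabilityMeasure μ] (hμsupp : μ (Set.Iic 0) = 0)
    (hnoatom : ∀ a : ℝ, μ (Set.Ioi a) = 0 → μ {a} = 0)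
    (W : ℕ → Ω → ℝ) (hWmeas : ∀ n, Measurable (W n))
    (hWlaw : ∀ n, Measure.map (W n) P = μ)
    (E : ℕ → Ω → ℝ) (hEmeas : ∀ n, Measurable (E n))
    (hElaw : ∀ n, ∀ x : ℝ, 0 ≤ x → P {ω | x < E n ω} = ENNReal.ofReal (Real.exp (-θ * x)))
    (τ : ℕ → Ω → ℝ) (hτ : ∀ n ω, τ n ω = ∑ i ∈ Finset.range n, E i ω)
    (Y : ℕ → ℝ → Ω → ℕ)
    (hY0 : ∀ n ω, Y n 0 ω = 1)
    (hYmono : ∀ n ω ⦃s t : ℝ⦄, 0 ≤ s → s ≤ t → Y n s ω ≤ Y n t ω)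
    (hYlaw : ∀ n, ∀ t : ℝ, 0 ≤ t → ∀ k : ℕ, 1 ≤ k →
      P {ω | Y n t ω = k} =
        ENNReal.ofReal (Real.exp (-t) * (1 - Real.exp (-t)) ^ (k - 1)))
    (hindep : iIndep (fun i : ℕ ⊕ ℕ ⊕ ℕ =>
      Sum.elim (fun n => MeasurableSpace.comap (W n) inferInstance)
        (Sum.elim (fun n => MeasurableSpace.comap (E n) inferInstance)
          (fun n => MeasurableSpace.comap (fun ω s => Y n s ω) inferInstance)) i) P)
    (Z : ℕ → ℝ → Ω → ℕ)
    (hZ : ∀ n t ω, Z n t ω = if τ n ω ≤ t then Y n (W n ω * (t - τ n ω)) ω else 0)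
    (Nt : ℝ → Ω → ℝ) (hN : ∀ t ω, Nt t ω = ∑' n, (Z n t ω : ℝ)) :
    ∀ i : ℕ, ∀ᵐ ω ∂P,
      Tendsto (fun t => (Z i t ω : ℝ)) atTop atTop ∧
      Tendsto (fun t => (Z i t ω : ℝ) / Nt t ω) atTop (nhds 0) := by
  intro i
  -- almost sure events
  have aeW : ∀ᵐ ω ∂P, ∀ n, 0 < W n ω := by
    rw [ae_all_iff]
    intro n
    rw [ae_iff]
    have hset : {ω | ¬ 0 < W n ω} = W n ⁻¹' Set.Iic 0 := by ext ω; simp [not_lt]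
    rw [hset, ← Measure.map_apply (hWmeas n) measurableSet_Iic, hWlaw n]
    exact hμsupp
  have aeJ : ∀ᵐ ω ∂P, ∃ j, j ≠ i ∧ W i ω < W j ω := by
    have h0 := aux_W P μ hnoatom W hWmeas hWlaw E Y hindep i
    refine (measure_eq_zero_iff_ae_notMem.mp h0).mono (fun ω hω => ?_)
    simp only [Set.mem_setOf_eq] at hω
    push_neg at hω
    exact hω
  have aeE : ∀ᵐ ω ∂P, ∀ n, 0 < E n ω := by
    rw [ae_all_iff]
    intro n
    rw [ae_iff]
    have hmeasE : MeasurableSet {ω | (0:ℝ) < E n ω} := by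
      have : {ω | (0:ℝ) < E n ω} = E n ⁻¹' Set.Ioi 0 := rfl
      rw [this]; exact (hEmeas n) measurableSet_Ioi
    have hset : {ω | ¬ 0 < E n ω} = {ω | (0:ℝ) < E n ω}ᶜ := by ext ω; simp
    rw [hset, prob_compl_eq_one_sub hmeasE, hElaw n 0 le_rfl]
    norm_num
  have aeτ : ∀ᵐ ω ∂P, ∀ tn : ℕ,
      ω ∉ ({ω | ∀ n, 0 < E n ω} ∩ {ω | ∀ n, τ n ω ≤ (tn:ℝ)}) := by
    rw [ae_all_iff]
    intro tn
    exact measure_eq_zero_iff_ae_notMem.mp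
      (aux_tau P θ hθ W E hEmeas hElaw τ hτ Y hindep (Nat.cast_nonneg tn))
  have aeG : ∀ᵐ ω ∂P, ∀ n k : ℕ, ∀ᶠ m : ℕ in atTop,
      Real.exp ((1 - 1/((k:ℝ)+1)) * (m + 1)) ≤ (Y n m ω : ℝ) ∧
      (Y n m ω : ℝ) ≤ Real.exp ((1 + 1/((k:ℝ)+1)) * m) := by
    rw [ae_all_iff]
    intro n
    rw [ae_all_iff]
    intro k
    refine aux_goodY_nk P Y hY0 hYmono hYlaw n (ε := 1/((k:ℝ)+1)) (by positivity) ?_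
    rw [div_le_one (by positivity)]
    linarith [Nat.cast_nonneg (α := ℝ) k]
  filter_upwards [aeW, aeJ, aeE, aeτ, aeG] with ω hW hJ hE2 hτbound hG
  -- deterministic consequences
  have hGp : ∀ n k : ℕ, ∀ᶠ s : ℝ in atTop,
      Real.exp ((1 - 1/((k:ℝ)+1)) * s) ≤ (Y n s ω : ℝ) ∧
      (Y n s ω : ℝ) ≤ Real.exp ((1 + 1/((k:ℝ)+1)) * (s+1)) := by
    intro n k
    refine aux_path Y hYmono n ω (by positivity) ?_ (hG n k)
    rw [div_le_one (by positivity)]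
    linarith [Nat.cast_nonneg (α := ℝ) k]
  have hτmono : ∀ a b : ℕ, a ≤ b → τ a ω ≤ τ b ω := by
    intro a b hab
    rw [hτ a ω, hτ b ω]
    exact Finset.sum_le_sum_of_subset_of_nonneg (Finset.range_subset_range.2 hab)
      (fun k _ _ => (hE2 k).le)
  have hsummable : ∀ t : ℝ, Summable (fun n => (Z n t ω : ℝ)) := by
    intro t
    obtain ⟨t', ht'⟩ := exists_nat_ge t
    obtain ⟨n₀, hn₀⟩ : ∃ n, (t':ℝ) < τ n ω := by
      by_contra hcon
      push_neg at hcon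
      exact hτbound t' ⟨hE2, hcon⟩
    apply summable_of_ne_finset_zero (s := Finset.range n₀)
    intro n hn
    rw [Finset.mem_range, not_lt] at hn
    have hlt : t < τ n ω := lt_of_le_of_lt ht' (lt_of_lt_of_le hn₀ (hτmono n₀ n hn))
    rw [hZ n t ω, if_neg (by linarith)]
    simp
  have hNge : ∀ (j' : ℕ) (t : ℝ), (Z j' t ω : ℝ) ≤ Nt t ω := by
    intro j' t
    rw [hN t ω]
    exact Summable.le_tsum (hsummable t) j' (fun k _ => Nat.cast_nonneg _)
  have hNnonneg : ∀ t, 0 ≤ Nt t ω := by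
    intro t
    rw [hN t ω]
    exact tsum_nonneg (fun k => Nat.cast_nonneg _)
  have hsTend : ∀ n : ℕ, Tendsto (fun t : ℝ => W n ω * (t - τ n ω)) atTop atTop := by
    intro n
    apply Tendsto.const_mul_atTop (hW n)
    have := tendsto_atTop_add_const_right atTop (-(τ n ω)) (tendsto_id (α := ℝ))
    simpa [sub_eq_add_neg] using this
  constructor
  · -- Z_i(t) → ∞
    have hev := (hsTend i).eventually (hGp i 1)
    have hgT : Tendsto (fun t : ℝ =>
        Real.exp ((1 - 1/(((1:ℕ):ℝ)+1)) * (W i ω * (t - τ i ω)))) atTop atTop := by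
      apply Real.tendsto_exp_atTop.comp
      exact Tendsto.const_mul_atTop (by norm_num) (hsTend i)
    refine tendsto_atTop_mono' atTop ?_ hgT
    filter_upwards [hev, eventually_ge_atTop (τ i ω)] with t h1 h2
    rw [hZ i t ω, if_pos h2]
    exact h1.1
  · -- ratio → 0
    obtain ⟨j, hji, hWij⟩ := hJ
    have hWi := hW i
    have hWj := hW j
    have hδ : 0 < (W j ω - W i ω)/(W i ω + W j ω) := div_pos (by linarith) (by linarith)
    obtain ⟨k, hk⟩ := exists_nat_one_div_lt hδ
    set ε : ℝ := 1/((k:ℝ)+1) with hε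
    have hε0 : 0 < ε := by positivity
    have hkey : (1+ε)*W i ω < (1-ε)*W j ω := by
      have hsum : (0:ℝ) < W i ω + W j ω := by linarith
      have h2 : ε * (W i ω + W j ω) < W j ω - W i ω := (lt_div_iff₀ hsum).1 hk
      nlinarith [h2]
    set a : ℝ := (1+ε)*W i ω - (1-ε)*W j ω with ha
    have ha0 : a < 0 := by rw [ha]; linarith
    set c : ℝ := (1+ε)*(1 - W i ω * τ i ω) + (1-ε)*(W j ω * τ j ω) with hc
    have hgto : Tendsto (fun t : ℝ => Real.exp (a*t + c)) atTop (nhds 0) := by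
      apply Real.tendsto_exp_atBot.comp
      exact tendsto_atBot_add_const_right atTop c
        ((tendsto_const_mul_atBot_of_neg ha0).2 tendsto_id)
    apply tendsto_of_tendsto_of_tendsto_of_le_of_le' tendsto_const_nhds hgto
    · exact Eventually.of_forall (fun t => div_nonneg (Nat.cast_nonneg _) (hNnonneg t))
    · have hevi := (hsTend i).eventually (hGp i k)
      have hevj := (hsTend j).eventually (hGp j k)
      filter_upwards [hevi, hevj, eventually_ge_atTop (τ i ω), eventually_ge_atTop (τ j ω)]
        with t hgi hgj hti htj
      have hZi : (Z i t ω : ℝ) ≤ Real.exp ((1+ε)*(W i ω*(t - τ i ω)+1)) := by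
        rw [hZ i t ω, if_pos hti]
        exact hgi.2
      have hZj : Real.exp ((1-ε)*(W j ω*(t - τ j ω))) ≤ (Z j t ω : ℝ) := by
        rw [hZ j t ω, if_pos htj]
        exact hgj.1
      have hexppos : (0:ℝ) < Real.exp ((1-ε)*(W j ω*(t-τ j ω))) := Real.exp_pos _
      have hNt : Real.exp ((1-ε)*(W j ω*(t-τ j ω))) ≤ Nt t ω := le_trans hZj (hNge j t)
      have hdiv : (Z i t ω:ℝ)/Nt t ω ≤
          Real.exp ((1+ε)*(W i ω*(t-τ i ω)+1)) / Real.exp ((1-ε)*(W j ω*(t-τ j ω))) :=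
        div_le_div₀ (Real.exp_nonneg _) hZi hexppos hNt
      refine le_trans hdiv (le_of_eq ?_)
      rw [← Real.exp_sub]
      congr 1
      rw [ha, hc]
      ring
end

section
/- Let (S_i(n))_{i≥1, n≥0} be a sequence-valued process with S_i(n) ∈ ℕ, Σ_i S_i(n) = n+1, such that for every fixed i, S_i(n)/n → 0 as n→∞ (pointwise on some event of probability 1), and such that at each step exactly one coordinate increases by 1. Then on that event it is not the case that max_i S_i(n)/n → 1; i.e., the proportion of customers at the largest table cannot converge to 1 almost surely if every fixed table is asymptotically microscopic. -/
open Filter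
open scoped ENNReal

/-- If `(S_i(n))` is a table-occupancy process with `Σ_i S_i(n) = n+1`, at each step
exactly one coordinate increasing by 1, and every fixed table asymptotically microscopic
(`S_i(n)/n → 0`), then the proportion of customers at the largest table cannot converge
to 1. -/
theorem largest_table_proportion_not_tendsto_one
    (S : ℕ → ℕ → ℕ)
    (htotal : ∀ n, ∑' i, (S i n : ℝ≥0∞) = n + 1)
    (hstep : ∀ n, ∃ i, S i (n + 1) = S i n + 1 ∧ ∀ j, j ≠ i → S j (n + 1) = S j n)
    (hmicro : ∀ i, Tendsto (fun n : ℕ => (S i n : ℝ) / n) atTop (nhds 0)) :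
    ¬ Tendsto (fun n : ℕ => ⨆ i, (S i n : ℝ) / n) atTop (nhds 1) := by
  classical
  intro hcon
  -- individual bound
  have hbound : ∀ i n, S i n ≤ n + 1 := by
    intro i n
    have h1 : (S i n : ℝ≥0∞) ≤ ∑' j, (S j n : ℝ≥0∞) := ENNReal.le_tsum i
    rw [htotal n] at h1
    have h2 : (S i n : ℝ≥0∞) ≤ ((n + 1 : ℕ) : ℝ≥0∞) := by push_cast; exact h1
    exact_mod_cast h2
  -- pair bound
  have hpair : ∀ i j n, i ≠ j → S i n + S j n ≤ n + 1 := by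
    intro i j n hij
    have h1 : ∑ k ∈ ({i, j} : Finset ℕ), (S k n : ℝ≥0∞) ≤ ∑' k, (S k n : ℝ≥0∞) :=
      ENNReal.sum_le_tsum _
    rw [Finset.sum_pair hij, htotal n] at h1
    have h2 : ((S i n + S j n : ℕ) : ℝ≥0∞) ≤ ((n + 1 : ℕ) : ℝ≥0∞) := by push_cast; exact h1
    exact_mod_cast h2
  -- monotonicity
  have hmono : ∀ i n, S i n ≤ S i (n + 1) := by
    intro i n
    obtain ⟨k, hk1, hk2⟩ := hstep n
    by_cases h : i = k
    · subst h; omega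
    · rw [hk2 i h]
  -- boundedness of the ranges
  have hbdd : ∀ n : ℕ, BddAbove (Set.range fun i => (S i n : ℝ) / n) := by
    intro n
    refine ⟨(n + 1 : ℝ) / n, ?_⟩
    rintro x ⟨i, rfl⟩
    rcases Nat.eq_zero_or_pos n with h0 | hpos
    · simp [h0]
    · have hn : (0 : ℝ) < n := by exact_mod_cast hpos
      have : (S i n : ℝ) ≤ (n : ℝ) + 1 := by exact_mod_cast hbound i n
      apply div_le_div_of_nonneg_right this hn.le |>.trans_eq rfl
  -- pick N ≥ 5 so that sup > 3/4 from N on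
  obtain ⟨N0, hN0⟩ := eventually_atTop.mp
    (hcon.eventually (eventually_gt_nhds (by norm_num : (3/4 : ℝ) < 1)))
  set N := max N0 5 with hNdef
  have hN5 : 5 ≤ N := le_max_right _ _
  have hsup : ∀ n, N ≤ n → 3/4 < ⨆ i, (S i n : ℝ) / n := by
    intro n hn
    exact hN0 n (le_trans (le_max_left _ _) hn)
  -- index of a large table at time N
  obtain ⟨i, hi⟩ := (lt_ciSup_iff (hbdd N)).mp (hsup N le_rfl)
  -- f eventually small, so there is m > N with f m ≤ 3/4
  have hex : ∃ m, N < m ∧ (S i m : ℝ) / m ≤ 3/4 := by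
    obtain ⟨m, hm⟩ := ((hmicro i).eventually
      (eventually_lt_nhds (by norm_num : (0:ℝ) < 3/4))).and
      (eventually_gt_atTop N) |>.exists
    exact ⟨m, hm.2, hm.1.le⟩
  obtain ⟨hMN, hMle⟩ := Nat.find_spec hex
  -- M = M' + 1 with M' ≥ N and f M' > 3/4
  obtain ⟨M', hM'eq⟩ : ∃ M', Nat.find hex = M' + 1 := ⟨Nat.find hex - 1, by omega⟩
  rw [hM'eq] at hMN hMle
  have hM'N : N ≤ M' := by omega
  have hfM' : 3/4 < (S i M' : ℝ) / M' := by
    rcases eq_or_lt_of_le hM'N with h | h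
    · rw [← h]; exact hi
    · have := Nat.find_min hex (show M' < Nat.find hex by omega)
      push_neg at this
      exact lt_of_not_ge (fun hle => absurd (this h) (not_lt_of_ge hle))
  -- step bound : f (M'+1) ≥ f M' - 1/M'
  have hM'5 : (5 : ℝ) ≤ M' := by exact_mod_cast le_trans hN5 hM'N
  have hM'pos : (0 : ℝ) < M' := by linarith
  have hM1pos : (0 : ℝ) < (M' : ℝ) + 1 := by linarith
  have hxy : (S i M' : ℝ) ≤ (S i (M' + 1) : ℝ) := by exact_mod_cast hmono i M'
  have hxb : (S i M' : ℝ) ≤ (M' : ℝ) + 1 := by exact_mod_cast hbound i M'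
  have hstepbd : (S i M' : ℝ) / M' - 1 / M' ≤ (S i (M' + 1) : ℝ) / ((M' : ℝ) + 1) := by
    rw [div_sub_div_same, div_le_div_iff₀ hM'pos hM1pos]
    nlinarith
  have hfM : 11/20 < (S i (M' + 1) : ℝ) / (M' + 1 : ℕ) := by
    push_cast
    have h1 : 1 / (M' : ℝ) ≤ 1 / 5 := by
      apply one_div_le_one_div_of_le <;> linarith
    linarith
  -- a large table at time M
  obtain ⟨j, hj⟩ := (lt_ciSup_iff (hbdd (M' + 1))).mp (hsup (M' + 1) (by omega))
  by_cases hji : j = i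
  · subst hji; linarith
  · have hp : (S i (M' + 1) : ℝ) + (S j (M' + 1) : ℝ) ≤ (M' : ℝ) + 1 + 1 := by
      exact_mod_cast hpair i j (M' + 1) (Ne.symm hji)
    have hM1 : (0 : ℝ) < ((M' + 1 : ℕ) : ℝ) := by push_cast; linarith
    have h2 : 3/4 * ((M' + 1 : ℕ) : ℝ) < (S j (M' + 1) : ℝ) := by
      rwa [lt_div_iff₀ hM1] at hj
    have h3 : 11/20 * ((M' + 1 : ℕ) : ℝ) < (S i (M' + 1) : ℝ) := by
      rwa [lt_div_iff₀ hM1] at hfM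
    push_cast at h2 h3
    linarith
end
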